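/- arXiv:2407.05936 — 4 statements merged into one kernel-verified Lean document; each statement's English description precedes it below -/
import Mathlib

section
/- Let b and n be positive integers with b ≤ n, and let F be the fan on ⌈n/b⌉ vertices. Then the b-blowup of F contains every n-vertex graph G for which there exists a set X ⊆ V(G) with |X| ≤ b such that bw(G−X) ≤ b. -/
open SimpleGraph

/-- Base-2 logarithm with the convention `log x = 1` for `x ≤ 2`. -/
noncomputable def log2' (x : ℝ) : ℝ := if x ≤ 2 then 1 else Real.logb 2 x

/-- `G` is contained in `G'`: `G` is isomorphic to a subgraph of `G'`. -/
def IsContainedIn {α β : Type} (G : SimpleGraph α) (G' : SimpleGraph β) : Prop :=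
  ∃ f : α → β, Function.Injective f ∧ ∀ u v : α, G.Adj u v → G'.Adj (f u) (f v)

/-- The `b`-blowup of a graph `H`: each vertex is replaced by a copy of `K_b`, and each edge
by a complete bipartite graph between the corresponding copies. -/
def blowup {α : Type} (H : SimpleGraph α) (b : ℕ) : SimpleGraph (α × Fin b) where
  Adj x y := (x.1 = y.1 ∧ x.2 ≠ y.2) ∨ H.Adj x.1 y.1
  symm := by
    constructor
    rintro x y (⟨h1, h2⟩ | h)
    · exact Or.inl ⟨h1.symm, fun hh => h2 hh.symm⟩
    · exact Or.inr h.symm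
  loopless := by
    constructor
    rintro x (⟨_, h2⟩ | h)
    · exact h2 rfl
    · exact H.loopless.irrefl _ h

/-- The fan on `p + 1` vertices: vertex `0` is the center, adjacent to every vertex of the
path `1, 2, …, p`. -/
def fan (p : ℕ) : SimpleGraph (Fin (p + 1)) :=
  SimpleGraph.fromRel (fun i j => i = 0 ∨ (i : ℕ) + 1 = (j : ℕ))

/-- The bandwidth of `G` is at most `b`: some ordering `v_1, …, v_n` of the vertices
satisfies `|i - j| ≤ b` for every edge `v_i v_j`. -/
def BandwidthLE {α : Type} [Fintype α] (G : SimpleGraph α) (b : ℝ) : Prop :=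
  ∃ e : α ≃ Fin (Fintype.card α),
    ∀ u v : α, G.Adj u v → |((e u : ℕ) : ℝ) - ((e v : ℕ) : ℝ)| ≤ b

/-- The graph `G - X` obtained from `G` by deleting the vertices in `X`. -/
def deleteVerts {α : Type} (G : SimpleGraph α) (X : Finset α) :
    SimpleGraph {v : α // v ∉ X} :=
  SimpleGraph.comap Subtype.val G

/-- **Lemma.** Let `b ≤ n` be positive integers and let `F` be the fan on `⌈n/b⌉` vertices.
Then the `b`-blowup of `F` contains every `n`-vertex graph `G` having a set `X ⊆ V(G)` with
`|X| ≤ b` such that `bw(G − X) ≤ b`.  (Here `fan ((n + b - 1) / b - 1)` is the fan on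
`⌈n/b⌉` vertices.) -/
theorem blowup_of_fan_universal
    (b n : ℕ) (hb : 0 < b) (hn : 0 < n) (hbn : b ≤ n)
    (V : Type) [Fintype V] [DecidableEq V] (G : SimpleGraph V)
    (hcard : Fintype.card V = n)
    (h : ∃ X : Finset V, X.card ≤ b ∧ BandwidthLE (deleteVerts G X) b) :
    IsContainedIn G (blowup (fan ((n + b - 1) / b - 1)) b) := by
  classical
  obtain ⟨X, hX, eord, hbw⟩ := h
  set P : ℕ := (n + b - 1) / b - 1 with hP
  -- Arithmetic: (P+1)*b ≥ n
  have hdiv : (n + b - 1) / b = (n - 1) / b + 1 := by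
    have h1 : n + b - 1 = (n - 1) + b := by omega
    rw [h1, Nat.add_div_right _ hb]
  have hPval : P = (n - 1) / b := by
    rw [hP, hdiv, Nat.add_sub_cancel]
  have hNb : n ≤ (P + 1) * b := by
    rw [hPval, add_mul, one_mul]
    have h2 := Nat.div_add_mod (n - 1) b
    have h3 := Nat.mod_lt (n - 1) hb
    calc n = (n - 1) + 1 := by omega
    _ = b * ((n - 1) / b) + (n - 1) % b + 1 := by rw [h2]
    _ ≤ (n - 1) / b * b + b := by rw [mul_comm]; omega
  -- cardinality of the complement
  have hm : Fintype.card {v : V // v ∉ X} = n - X.card := by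
    rw [Fintype.card_subtype_compl, hcard, Fintype.card_coe]
  have hXn : X.card ≤ n := le_trans hX hbn
  -- position function
  set pos : V → ℕ := fun v =>
    if hv : v ∈ X then (X.equivFin ⟨v, hv⟩ : ℕ) else X.card + (eord ⟨v, hv⟩ : ℕ) with hposdef
  have hposX : ∀ v (hv : v ∈ X), pos v < X.card := by
    intro v hv
    simp only [hposdef, dif_pos hv]
    exact (X.equivFin ⟨v, hv⟩).isLt
  have hposC : ∀ v (hv : v ∉ X), X.card ≤ pos v ∧ pos v < n := by
    intro v hv
    simp only [hposdef, dif_neg hv]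
    refine ⟨Nat.le_add_right _ _, ?_⟩
    have := (eord ⟨v, hv⟩).isLt
    omega
  have hposn : ∀ v, pos v < n := by
    intro v
    by_cases hv : v ∈ X
    · exact lt_of_lt_of_le (hposX v hv) hXn
    · exact (hposC v hv).2
  have hposinj : Function.Injective pos := by
    intro u v huv
    by_cases hu : u ∈ X <;> by_cases hv : v ∈ X
    · simp only [hposdef, dif_pos hu, dif_pos hv] at huv
      have := X.equivFin.injective (Fin.val_injective huv)
      exact congrArg Subtype.val this
    · exfalso
      have h1 := hposX u hu; have h2 := hposC v hv; omega
    · exfalso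
      have h1 := hposX v hv; have h2 := hposC u hu; omega
    · simp only [hposdef, dif_neg hu, dif_neg hv] at huv
      have h' : (eord ⟨u, hu⟩ : ℕ) = (eord ⟨v, hv⟩ : ℕ) := by omega
      have := eord.injective (Fin.val_injective h')
      exact congrArg Subtype.val this
  have hposlt : ∀ v, pos v / b < P + 1 := by
    intro v
    rw [Nat.div_lt_iff_lt_mul hb]
    exact lt_of_lt_of_le (hposn v) hNb
  -- the embedding
  set f : V → (Fin (P + 1)) × Fin b := fun v =>
    (⟨pos v / b, hposlt v⟩, ⟨pos v % b, Nat.mod_lt _ hb⟩) with hfdef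
  refine ⟨f, ?_, ?_⟩
  · -- injectivity
    intro u v huv
    simp only [hfdef, Prod.mk.injEq, Fin.mk.injEq] at huv
    obtain ⟨h1, h2⟩ := huv
    apply hposinj
    calc pos u = b * (pos u / b) + pos u % b := (Nat.div_add_mod _ _).symm
    _ = b * (pos v / b) + pos v % b := by rw [h1, h2]
    _ = pos v := Nat.div_add_mod _ _
  · -- adjacency
    -- helper: an endpoint in X
    have keyX : ∀ u v, G.Adj u v → u ∈ X → (blowup (fan P) b).Adj (f u) (f v) := by
      intro u v hadj hu
      have hqu : pos u < b := lt_of_lt_of_le (hposX u hu) hX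
      have hdu : pos u / b = 0 := Nat.div_eq_of_lt hqu
      by_cases hr : pos v < b
      · -- both in the center copy
        refine Or.inl ⟨?_, ?_⟩
        · simp only [hfdef]
          exact Fin.mk_eq_mk.mpr (by rw [hdu, Nat.div_eq_of_lt hr])
        · simp only [hfdef]
          intro hc
          have hc' : pos u % b = pos v % b := Fin.mk_eq_mk.mp hc
          rw [Nat.mod_eq_of_lt hqu, Nat.mod_eq_of_lt hr] at hc'
          exact hadj.ne (hposinj hc')
      · -- v is on the path, u in the center
        refine Or.inr ?_
        have hdv : 0 < pos v / b := Nat.one_le_div_iff hb |>.mpr (le_of_not_gt hr)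
        show (fan P).Adj _ _
        rw [fan, SimpleGraph.fromRel_adj]
        constructor
        · intro hc
          have := Fin.mk_eq_mk.mp hc
          omega
        · left; left
          apply Fin.ext
          show pos u / b = ((0 : Fin (P + 1)) : ℕ)
          rw [Fin.val_zero]; exact hdu
    -- helper: both outside X, ordered
    have key3 : ∀ u v (hu : u ∉ X) (hv : v ∉ X), G.Adj u v → pos u < pos v →
        (blowup (fan P) b).Adj (f u) (f v) := by
      intro u v hu hv hadj hlt
      have hbnd := hbw ⟨u, hu⟩ ⟨v, hv⟩ hadj
      rw [abs_sub_le_iff] at hbnd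
      have hband : pos v ≤ pos u + b := by
        have h2 : ((eord ⟨v, hv⟩ : ℕ) : ℝ) ≤ ((eord ⟨u, hu⟩ : ℕ) : ℝ) + b := by
          linarith [hbnd.2]
        have h2' : (eord ⟨v, hv⟩ : ℕ) ≤ (eord ⟨u, hu⟩ : ℕ) + b := by exact_mod_cast h2
        simp only [hposdef, dif_neg hu, dif_neg hv]
        omega
      by_cases hq : pos u / b = pos v / b
      · refine Or.inl ⟨?_, ?_⟩
        · simp only [hfdef]; exact Fin.mk_eq_mk.mpr hq
        · simp only [hfdef]
          intro hc
          have hc' : pos u % b = pos v % b := Fin.mk_eq_mk.mp hc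
          have e1 := Nat.div_add_mod (pos u) b
          have e2 := Nat.div_add_mod (pos v) b
          rw [hq, hc'] at e1
          rw [e2] at e1
          omega
      · refine Or.inr ?_
        have h1 : pos u / b < pos v / b :=
          lt_of_le_of_ne (Nat.div_le_div_right (le_of_lt hlt)) hq
        have h2 : pos v / b ≤ pos u / b + 1 := by
          calc pos v / b ≤ (pos u + b) / b := Nat.div_le_div_right hband
          _ = pos u / b + 1 := Nat.add_div_right _ hb
        have heq : pos u / b + 1 = pos v / b := by omega
        show (fan P).Adj _ _
        rw [fan, SimpleGraph.fromRel_adj]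
        refine ⟨?_, Or.inl (Or.inr ?_)⟩
        · intro hc
          have := Fin.mk_eq_mk.mp hc
          omega
        · simpa using heq
    intro u v hadj
    by_cases hu : u ∈ X
    · exact keyX u v hadj hu
    by_cases hv : v ∈ X
    · exact (keyX v u hadj.symm hv).symm
    rcases lt_trichotomy (pos u) (pos v) with hlt | heq | hgt
    · exact key3 u v hu hv hadj hlt
    · exact absurd (hposinj heq) hadj.ne
    · exact (key3 v u hv hu hadj.symm hgt).symm
end

section
/- If an n-vertex graph G is contained in a b-blowup of a fan F, then there exists a set X ⊆ V(G) with |X| ≤ b such that bw(G−X) ≤ 2b−1. -/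
open SimpleGraph

/-- `F` is a fan: it is isomorphic to `fan p` for some `p`. -/
def IsFan {α : Type} (F : SimpleGraph α) : Prop := ∃ p : ℕ, Nonempty (F ≃g fan p)

lemma strictMono_fin_add {n : ℕ} {F : Fin n → ℕ} (h : StrictMono F) :
    ∀ (d : ℕ) (i j : Fin n), (j : ℕ) = (i : ℕ) + d → F i + d ≤ F j := by
  intro d
  induction d with
  | zero =>
    intro i j hij
    have : i = j := Fin.ext (by omega)
    simp [this]
  | succ d ih =>
    intro i j hij
    have hlt : (i : ℕ) + d < n := by omega
    have h1 : F i + d ≤ F ⟨(i : ℕ) + d, hlt⟩ := ih i _ rfl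
    have h2 : F ⟨(i : ℕ) + d, hlt⟩ < F j := h (by simp [Fin.lt_def]; omega)
    omega

lemma nat_abs_real (a c B : ℕ) (h1 : a ≤ c + (B - 1)) (h2 : c ≤ a + (B - 1)) (hB : 1 ≤ B) :
    |(a : ℝ) - (c : ℝ)| ≤ (B : ℝ) - 1 := by
  have : |(a : ℤ) - (c : ℤ)| ≤ (B : ℤ) - 1 := by rw [abs_le]; omega
  exact_mod_cast this

lemma mul_add_inj {b : ℕ} (hb : 0 < b) {a a' c c' : ℕ} (hc : c < b) (hc' : c' < b)
    (h : a * b + c = a' * b + c') : a = a' ∧ c = c' := by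
  have h1 : (b * a + c) / b = a := by
    rw [Nat.mul_add_div hb, Nat.div_eq_of_lt hc]; omega
  have h2 : (b * a' + c') / b = a' := by
    rw [Nat.mul_add_div hb, Nat.div_eq_of_lt hc']; omega
  have h3 : (b * a + c) % b = c := by
    rw [Nat.mul_add_mod, Nat.mod_eq_of_lt hc]
  have h4 : (b * a' + c') % b = c' := by
    rw [Nat.mul_add_mod, Nat.mod_eq_of_lt hc']
  rw [mul_comm a b, mul_comm a' b] at h
  rw [h] at h1 h3
  omega

/-- **Lemma.** If an `n`-vertex graph `G` is contained in a `b`-blowup of a fan `F`, then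
there exists `X ⊆ V(G)` with `|X| ≤ b` such that `bw(G − X) ≤ 2b − 1`. -/
theorem fan_blowup_del_set_bandwidth
    (n b : ℕ) (V : Type) [Fintype V] [DecidableEq V] (G : SimpleGraph V)
    (hcard : Fintype.card V = n)
    (α : Type) (F : SimpleGraph α) (hF : IsFan F)
    (h : IsContainedIn G (blowup F b)) :
    ∃ X : Finset V, X.card ≤ b ∧
      BandwidthLE (deleteVerts G X) (2 * (b : ℝ) - 1) := by
  obtain ⟨p, ⟨φ⟩⟩ := hF
  obtain ⟨f0, hf0inj, hf0adj⟩ := h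
  set f : V → Fin (p + 1) × Fin b := fun v => (φ (f0 v).1, (f0 v).2) with hf
  have hfinj : Function.Injective f := by
    intro u v huv
    have h1 : (f0 u).1 = (f0 v).1 := φ.injective (congrArg Prod.fst huv)
    have h2 : (f u).2 = (f v).2 := congrArg Prod.snd huv
    exact hf0inj (Prod.ext h1 h2)
  have hfadj : ∀ u v : V, G.Adj u v → (blowup (fan p) b).Adj (f u) (f v) := by
    intro u v huv
    rcases hf0adj u v huv with ⟨h1, h2⟩ | h1
    · exact Or.inl ⟨congrArg φ h1, h2⟩
    · exact Or.inr (φ.map_adj_iff.mpr h1)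
  rcases Nat.eq_zero_or_pos b with hb | hb
  · subst hb
    have hV : IsEmpty V := ⟨fun v => (f v).2.elim0⟩
    refine ⟨∅, by simp, Fintype.equivFin _, fun u v huv => ?_⟩
    exact isEmptyElim u.1
  · classical
    set X : Finset V := Finset.univ.filter (fun v => (f v).1 = 0) with hX
    have hXcard : X.card ≤ b := by
      have hmm : ∀ v ∈ X, (fun v => (f v).2) v ∈ (Finset.univ : Finset (Fin b)) :=
        fun v _ => Finset.mem_univ _
      have hinj : ∀ u ∈ X, ∀ v ∈ X, (f u).2 = (f v).2 → u = v := by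
        intro u hu v hv huv
        simp only [hX, Finset.mem_filter] at hu hv
        exact hfinj (Prod.ext (hu.2.trans hv.2.symm) huv)
      calc X.card ≤ (Finset.univ : Finset (Fin b)).card :=
            Finset.card_le_card_of_injOn _ hmm hinj
        _ = b := by simp
    refine ⟨X, hXcard, ?_⟩
    have hmem : ∀ v : {v : V // v ∉ X}, ((f v.1).1 : ℕ) ≠ 0 := by
      intro v
      have hv2 := v.2
      simp only [hX, Finset.mem_filter, Finset.mem_univ, true_and] at hv2
      intro hh
      exact hv2 (Fin.ext hh)
    set g : {v : V // v ∉ X} → ℕ :=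
      fun v => (((f v.1).1 : ℕ) - 1) * b + ((f v.1).2 : ℕ) with hg
    have hgval : ∀ v : {v : V // v ∉ X},
        g v = (((f v.1).1 : ℕ) - 1) * b + ((f v.1).2 : ℕ) := fun v => rfl
    have hginj : Function.Injective g := by
      intro u v huv
      rw [hgval, hgval] at huv
      obtain ⟨h1, h2⟩ := mul_add_inj hb (f u.1).2.isLt (f v.1).2.isLt huv
      have hu1 := hmem u
      have hv1 := hmem v
      have heq : ((f u.1).1 : ℕ) = ((f v.1).1 : ℕ) := by omega
      have : f u.1 = f v.1 := Prod.ext (Fin.ext heq) (Fin.ext h2)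
      exact Subtype.ext (hfinj this)
    set s : Finset ℕ := Finset.univ.image g with hs
    have hscard : s.card = Fintype.card {v : V // v ∉ X} := by
      rw [hs, Finset.card_image_of_injective _ hginj, Finset.card_univ]
    set oi := s.orderIsoOfFin hscard with hoi
    have hmem' : ∀ v : {v : V // v ∉ X}, g v ∈ s :=
      fun v => Finset.mem_image_of_mem g (Finset.mem_univ v)
    set E0 : {v : V // v ∉ X} → Fin (Fintype.card {v : V // v ∉ X}) :=
      fun v => oi.symm ⟨g v, hmem' v⟩ with hE0
    set Fct : Fin (Fintype.card {v : V // v ∉ X}) → ℕ := fun i => ((oi i : ℕ)) with hFct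
    have hFmono : StrictMono Fct := by
      intro i j hij
      exact_mod_cast oi.strictMono hij
    have hFE : ∀ v, Fct (E0 v) = g v := by
      intro v
      simp only [hFct, hE0, OrderIso.apply_symm_apply]
    have hE0inj : Function.Injective E0 := by
      intro u v huv
      have : Fct (E0 u) = Fct (E0 v) := congrArg Fct huv
      rw [hFE, hFE] at this
      exact hginj this
    have hbij : Function.Bijective E0 :=
      (Fintype.bijective_iff_injective_and_card E0).mpr ⟨hE0inj, by simp⟩
    have hgbound : ∀ u v : {v : V // v ∉ X}, (deleteVerts G X).Adj u v →
        g u ≤ g v + (2 * b - 1) ∧ g v ≤ g u + (2 * b - 1) := by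
      intro u v huv
      have hadj : (blowup (fan p) b).Adj (f u.1) (f v.1) := hfadj _ _ huv
      have hA0 := hmem u
      have hA'0 := hmem v
      have hBlt : ((f u.1).2 : ℕ) < b := (f u.1).2.isLt
      have hB'lt : ((f v.1).2 : ℕ) < b := (f v.1).2.isLt
      have hAA : ((f u.1).1 : ℕ) = ((f v.1).1 : ℕ) ∨
          ((f u.1).1 : ℕ) + 1 = ((f v.1).1 : ℕ) ∨
          ((f v.1).1 : ℕ) + 1 = ((f u.1).1 : ℕ) := by
        rcases hadj with ⟨h1, _⟩ | h1
        · exact Or.inl (congrArg Fin.val h1)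
        · simp only [fan, SimpleGraph.fromRel_adj] at h1
          obtain ⟨hne, h1⟩ := h1
          rcases h1 with (h1 | h1) | (h1 | h1)
          · exact absurd (congrArg Fin.val h1) hA0
          · exact Or.inr (Or.inl h1)
          · exact absurd (congrArg Fin.val h1) hA'0
          · exact Or.inr (Or.inr h1)
      rw [hgval u, hgval v]
      set A := ((f u.1).1 : ℕ)
      set B := ((f u.1).2 : ℕ)
      set A' := ((f v.1).1 : ℕ)
      set B' := ((f v.1).2 : ℕ)
      rcases hAA with hAA | hAA | hAA
      · rw [hAA]; omega
      · have hx : (A' - 1) * b = (A - 1) * b + b := by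
          have hAe : A' - 1 = (A - 1) + 1 := by omega
          rw [hAe]; ring
        rw [hx]; omega
      · have hx : (A - 1) * b = (A' - 1) * b + b := by
          have hAe : A - 1 = (A' - 1) + 1 := by omega
          rw [hAe]; ring
        rw [hx]; omega
    have key : ∀ x y : {v : V // v ∉ X}, (deleteVerts G X).Adj x y → E0 x ≤ E0 y →
        ((E0 y : ℕ)) ≤ (E0 x : ℕ) + (2 * b - 1) := by
      intro x y hadj hxy
      have hd : ((E0 y : ℕ)) = (E0 x : ℕ) + ((E0 y : ℕ) - (E0 x : ℕ)) := by
        have := Fin.le_def.mp hxy; omega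
      have hstep := strictMono_fin_add hFmono ((E0 y : ℕ) - (E0 x : ℕ)) (E0 x) (E0 y) hd
      rw [hFE, hFE] at hstep
      obtain ⟨hc1, hc2⟩ := hgbound x y hadj
      omega
    refine ⟨Equiv.ofBijective E0 hbij, ?_⟩
    intro u v huv
    show |((E0 u : ℕ) : ℝ) - ((E0 v : ℕ) : ℝ)| ≤ 2 * (b : ℝ) - 1
    rcases le_total (E0 u) (E0 v) with hle | hle
    · have h2 := key u v huv hle
      have h1 : (E0 u : ℕ) ≤ (E0 v : ℕ) + (2 * b - 1) := by
        have := Fin.le_def.mp hle; omega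
      have h3 := nat_abs_real (E0 u : ℕ) (E0 v : ℕ) (2 * b) h1 h2 (by omega)
      push_cast at h3 ⊢
      linarith
    · have h2 := key v u huv.symm hle
      have h1 : (E0 v : ℕ) ≤ (E0 u : ℕ) + (2 * b - 1) := by
        have := Fin.le_def.mp hle; omega
      have h3 := nat_abs_real (E0 u : ℕ) (E0 v : ℕ) (2 * b) h2 h1 (by omega)
      push_cast at h3 ⊢
      linarith
end

section
/- Let H be a graph, let (B_x)_{x∈V(T)} be a tree-decomposition of H, and let ξ: V(H) → ℝ be a function that is non-negative on V(H); for a subgraph X of H write ξ(X) := Σ_{v∈V(X)} ξ(v). Then for every positive integer c there exists a set S ⊆ V(T) with |S| ≤ c−1 such that every connected component X of H − (⋃_{x∈S} B_x) satisfies ξ(X) ≤ ξ(H)/c. -/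
open SimpleGraph

/-- Tree decompositions: the bags cover every edge, and for each vertex the tree nodes whose
bag contains it induce a non-empty connected subtree. -/
structure IsTreeDecomp {α τ : Type} (H : SimpleGraph α) (T : SimpleGraph τ)
    (B : τ → Set α) : Prop where
  isTree : T.IsTree
  edge_cover : ∀ u v : α, H.Adj u v → ∃ x : τ, u ∈ B x ∧ v ∈ B x
  bags_connected : ∀ v : α, (T.induce {x : τ | v ∈ B x}).Connected

/-- `H` has a tree decomposition all of whose bags have at most `m` vertices. -/
def HasTreeDecompBagsLE {α : Type} (H : SimpleGraph α) (m : ℕ) : Prop :=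
  ∃ (τ : Type) (T : SimpleGraph τ) (B : τ → Set α),
    IsTreeDecomp H T B ∧ ∀ x : τ, (B x).Finite ∧ (B x).ncard ≤ m

/-- `H` has treewidth at most `t`. -/
def TreewidthLE {α : Type} (H : SimpleGraph α) (t : ℕ) : Prop :=
  HasTreeDecompBagsLE H (t + 1)

namespace WSepAux

variable {τ : Type} {T : SimpleGraph τ}

/-- The unique path between two vertices of a tree (as a walk). -/
noncomputable def pth (hT : T.IsTree) (a b : τ) : T.Walk a b :=
  letI := Classical.decEq τ
  (hT.isConnected.preconnected a b).some.bypass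

lemma pth_isPath (hT : T.IsTree) (a b : τ) : (pth hT a b).IsPath := by
  unfold pth
  letI := Classical.decEq τ
  exact Walk.bypass_isPath _

lemma pth_uniq (hT : T.IsTree) {a b : τ} (p : T.Walk a b) (hp : p.IsPath) :
    p = pth hT a b := by
  have := hT.2.path_unique ⟨p, hp⟩ ⟨pth hT a b, pth_isPath hT a b⟩
  exact Subtype.ext_iff.mp this

section Root

variable [DecidableEq τ]

lemma take_eq (hT : T.IsTree) {a b x : τ} (h : x ∈ (pth hT a b).support) :
    (pth hT a b).takeUntil x h = pth hT a x :=
  pth_uniq hT _ ((pth_isPath hT a b).takeUntil h)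

lemma drop_eq (hT : T.IsTree) {a b x : τ} (h : x ∈ (pth hT a b).support) :
    (pth hT a b).dropUntil x h = pth hT x b :=
  pth_uniq hT _ ((pth_isPath hT a b).dropUntil h)

/-- `desc hT r x` : the set of vertices `y` such that `x` lies on the path from root `r`
to `y` (descendants of `x` together with `x`). -/
def desc (hT : T.IsTree) (r x : τ) : Set τ := {y | x ∈ (pth hT r y).support}

lemma mem_desc_self (hT : T.IsTree) (r x : τ) : x ∈ desc hT r x :=
  Walk.end_mem_support _

lemma mem_desc_root (hT : T.IsTree) (r y : τ) : y ∈ desc hT r r :=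
  Walk.start_mem_support _

lemma desc_trans (hT : T.IsTree) {r x z y : τ} (hz : z ∈ desc hT r x)
    (hy : y ∈ desc hT r z) : y ∈ desc hT r x := by
  -- x ∈ pth r z, z ∈ pth r y ; pth r z = takeUntil of pth r y
  have h1 : z ∈ (pth hT r y).support := hy
  have h2 : x ∈ (pth hT r z).support := hz
  rw [← take_eq hT h1] at h2
  exact Walk.support_takeUntil_subset _ _ h2

/-- Edge constancy: for an edge `a ~ b` avoiding `x`, membership in `desc x` propagates. -/
lemma adj_desc (hT : T.IsTree) {r x a b : τ} (hab : T.Adj a b) (hxa : x ≠ a)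
    (hxb : x ≠ b) (ha : a ∈ desc hT r x) : b ∈ desc hT r x := by
  by_cases hax : a ∈ (pth hT r b).support
  · have h2 : x ∈ (pth hT r a).support := ha
    rw [← take_eq hT hax] at h2
    exact Walk.support_takeUntil_subset _ _ h2
  · -- append the edge b~a to the path r..b, obtaining the path r..a
    have hq : ((pth hT r b).concat hab.symm).IsPath := by
      rw [Walk.isPath_def, Walk.support_concat]
      exact List.Nodup.append (pth_isPath hT r b).support_nodup (List.nodup_singleton a)
        (by simpa using fun h => hax h)
    have he := pth_uniq hT _ hq
    have h2 : x ∈ ((pth hT r b).concat hab.symm).support := by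
      rw [he]; exact ha
    rw [Walk.support_concat, List.mem_append] at h2
    rcases h2 with h2 | h2
    · exact h2
    · simp at h2; exact absurd h2 hxa

lemma walk_desc (hT : T.IsTree) {r x : τ} :
    ∀ {a b : τ} (p : T.Walk a b), x ∉ p.support → a ∈ desc hT r x → b ∈ desc hT r x := by
  intro a b p
  induction p with
  | nil => intro _ h; exact h
  | cons h q ih =>
    intro hx ha
    rw [Walk.support_cons, List.mem_cons] at hx
    push_neg at hx
    exact ih hx.2 (adj_desc hT h hx.1
      (fun hh => hx.2 (by rw [hh]; exact q.start_mem_support)) ha)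

/-- A neighbor of `x` not on the root path of `x` is a descendant of `x`. -/
lemma nbr_desc (hT : T.IsTree) {r x z : τ} (hxz : T.Adj x z)
    (hz : z ∉ (pth hT r x).support) : z ∈ desc hT r x := by
  by_cases h : x ∈ (pth hT r z).support
  · exact h
  · exfalso
    have hq : ((pth hT r z).concat hxz.symm).IsPath := by
      rw [Walk.isPath_def, Walk.support_concat]
      exact List.Nodup.append (pth_isPath hT r z).support_nodup (List.nodup_singleton x)
        (by simpa using fun hh => h hh)
    have he := pth_uniq hT _ hq
    apply hz
    rw [← he, Walk.support_concat, List.mem_append]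
    exact Or.inl (Walk.end_mem_support _)

lemma exists_succ (hT : T.IsTree) {r x y : τ} (hx : x ∈ (pth hT r y).support)
    (hxy : x ≠ y) :
    ∃ z, T.Adj x z ∧ z ∈ (pth hT r y).support ∧ z ∉ (pth hT r x).support := by
  have hdrop : ∃ z, T.Adj x z ∧ z ∈ ((pth hT r y).dropUntil x hx).support.tail := by
    generalize hd : (pth hT r y).dropUntil x hx = d
    cases d with
    | nil => exact absurd rfl hxy
    | cons h q => exact ⟨_, h, by simp⟩
  obtain ⟨z, hxz, hztail⟩ := hdrop
  refine ⟨z, hxz, ?_, ?_⟩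
  · exact Walk.support_dropUntil_subset _ hx (List.mem_of_mem_tail hztail)
  · rw [← take_eq hT hx]
    have hspec := (pth hT r y).take_spec hx
    have hnodup := (pth_isPath hT r y).support_nodup
    rw [← hspec, Walk.support_append] at hnodup
    have hdisj := List.disjoint_of_nodup_append hnodup
    intro hmem
    exact hdisj hmem hztail

/-- Key branch lemma: along an edge `y ~ y'` inside the strict descendants of `x`,
membership in `desc z` (for `z` a child of `x`) propagates. -/
lemma nbr_step (hT : T.IsTree) {r x z y y' : τ} (hxz : T.Adj x z)
    (hyy' : T.Adj y y') (hy : y ∈ desc hT r z) (hy' : y' ∈ desc hT r x)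
    (hy'x : y' ≠ x) : y' ∈ desc hT r z := by
  by_cases h1 : z = y'
  · exact h1 ▸ mem_desc_self hT r z
  by_cases h2 : z = y
  · subst h2
    have hx' : x ∈ (pth hT r y').support := hy'
    by_cases h3 : z ∈ ((pth hT r y').dropUntil x hx').support
    · exact Walk.support_dropUntil_subset _ hx' h3
    · exfalso
      have hqp : (((pth hT r y').dropUntil x hx').concat hyy'.symm).IsPath := by
        rw [Walk.isPath_def, Walk.support_concat]
        exact List.Nodup.append ((pth_isPath hT r y').dropUntil hx').support_nodup
          (List.nodup_singleton z) (by simpa using fun hh => h3 hh)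
      have hep : (Walk.cons hxz Walk.nil).IsPath := by
        rw [Walk.isPath_def]
        simp [hxz.ne]
      have e1 := pth_uniq hT _ hqp
      have e2 := pth_uniq hT _ hep
      have hse : (((pth hT r y').dropUntil x hx').concat hyy'.symm).support =
          (Walk.cons hxz Walk.nil).support := by rw [e1, e2]
      have hy'mem : y' ∈ (((pth hT r y').dropUntil x hx').concat hyy'.symm).support := by
        rw [Walk.support_concat, List.mem_append]
        exact Or.inl (Walk.end_mem_support _)
      rw [hse] at hy'mem
      simp only [Walk.support_cons, Walk.support_nil, List.mem_cons, List.mem_singleton,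
        List.not_mem_nil, or_false] at hy'mem
      rcases hy'mem with h | h
      · exact hy'x h
      · exact h1 h.symm
  · exact adj_desc hT hyy' h2 h1 hy

lemma walk_branch (hT : T.IsTree) {r x z : τ} (hxz : T.Adj x z) :
    ∀ {a b : τ} (p : T.Walk a b),
      (∀ u ∈ p.support, u ∈ desc hT r x ∧ u ≠ x) → a ∈ desc hT r z → b ∈ desc hT r z := by
  intro a b p
  induction p with
  | nil => exact fun _ h => h
  | cons h q ih =>
    intro hsupp ha
    have hnext := hsupp _ (by
      rw [Walk.support_cons]; exact List.mem_cons_of_mem _ q.start_mem_support)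
    exact ih (fun u hu => hsupp u (by
      rw [Walk.support_cons]; exact List.mem_cons_of_mem _ hu))
      (nbr_step hT hxz h ha hnext.1 hnext.2)

end Root

lemma connected_walk {S : Set τ} (hS : (T.induce S).Connected) {a b : τ}
    (ha : a ∈ S) (hb : b ∈ S) : ∃ p : T.Walk a b, ∀ u ∈ p.support, u ∈ S := by
  obtain ⟨W⟩ := hS.preconnected ⟨a, ha⟩ ⟨b, hb⟩
  refine ⟨W.map (Embedding.induce S).toHom, ?_⟩
  intro u hu
  erw [Walk.support_map, List.mem_map] at hu
  obtain ⟨u', _, rfl⟩ := hu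
  exact u'.2

/-- Total weight of a set of vertices. -/
noncomputable def wt {α : Type} [Fintype α] (ξ : α → ℝ) (A : Set α) : ℝ :=
  ∑ v ∈ (Set.toFinite A).toFinset, ξ v

lemma wt_mono {α : Type} [Fintype α] (ξ : α → ℝ) (hξ : ∀ v, 0 ≤ ξ v) {A A' : Set α}
    (h : A ⊆ A') : wt ξ A ≤ wt ξ A' := by
  apply Finset.sum_le_sum_of_subset_of_nonneg
  · intro v hv
    rw [Set.Finite.mem_toFinset] at hv ⊢
    exact h hv
  · exact fun v _ _ => hξ v

lemma wt_union_disjoint {α : Type} [Fintype α] (ξ : α → ℝ) {A A' : Set α}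
    (h : Disjoint A A') : wt ξ (A ∪ A') = wt ξ A + wt ξ A' := by
  classical
  rw [wt, wt, wt, ← Finset.sum_union]
  · congr 1
    ext v
    simp only [Set.Finite.mem_toFinset, Finset.mem_union]
    exact Iff.rfl
  · rw [Finset.disjoint_left]
    intro v hv hv'
    rw [Set.Finite.mem_toFinset] at hv hv'
    exact Set.disjoint_left.mp h hv hv'

lemma wt_univ {α : Type} [Fintype α] (ξ : α → ℝ) : wt ξ Set.univ = ∑ v, ξ v := by
  rw [wt]
  apply Finset.sum_congr _ (fun _ _ => rfl)
  ext v
  simp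

/-- The main inductive argument: if the total weight of vertices whose bag-subtree lies in
`U` is at most `(k+1)w`, then there are at most `k` bags whose removal leaves all relevant
connected pieces of weight at most `w`. -/
lemma aux {α : Type} [Fintype α] {τ : Type} [DecidableEq τ] {T : SimpleGraph τ}
    (hT : T.IsTree) (r : τ) (H : SimpleGraph α) (B : τ → Set α)
    (hcov : ∀ u v : α, H.Adj u v → ∃ x : τ, u ∈ B x ∧ v ∈ B x)
    (hbc : ∀ v : α, (T.induce {x : τ | v ∈ B x}).Connected)
    (ξ : α → ℝ) (hξ : ∀ v, 0 ≤ ξ v) {w : ℝ} (hw : 0 < w) :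
    ∀ k : ℕ, ∀ U : Set τ, wt ξ {v | {x : τ | v ∈ B x} ⊆ U} ≤ (k + 1) * w →
    ∃ F : Finset τ, F.card ≤ k ∧ ∀ C : Set α,
      (∀ v ∈ C, {x : τ | v ∈ B x} ⊆ U) →
      (∀ v ∈ C, ∀ x ∈ F, v ∉ B x) →
      (∀ u ∈ C, ∀ v ∈ C, ∃ p : H.Walk u v, ∀ y ∈ p.support, y ∈ C) →
      wt ξ C ≤ w := by
  intro k
  induction k with
  | zero =>
    intro U hU
    refine ⟨∅, le_refl 0, fun C h1 _ _ => ?_⟩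
    refine le_trans (wt_mono ξ hξ (fun v hv => h1 v hv)) ?_
    calc wt ξ {v | {x : τ | v ∈ B x} ⊆ U} ≤ ((0 : ℕ) + 1) * w := hU
    _ = w := by push_cast; ring
  | succ k ih =>
    intro U hU
    by_cases hbase : wt ξ {v | {x : τ | v ∈ B x} ⊆ U} ≤ w
    · exact ⟨∅, Nat.zero_le _,
        fun C h1 _ _ => le_trans (wt_mono ξ hξ (fun v hv => h1 v hv)) hbase⟩
    push_neg at hbase
    have ht : ∀ v : α, ∃ x, v ∈ B x := by
      intro v
      obtain ⟨⟨x, hx⟩⟩ := (hbc v).nonempty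
      exact ⟨x, hx⟩
    choose t htB using ht
    set σ : τ → ℝ := fun y => wt ξ {v | {x : τ | v ∈ B x} ⊆ U ∩ desc hT r y} with hσ
    have candmem : ∀ y : τ, w < σ y → ∃ v : α, {x : τ | v ∈ B x} ⊆ U ∩ desc hT r y := by
      intro y hy
      by_contra hno
      push_neg at hno
      have hempty : {v : α | {x : τ | v ∈ B x} ⊆ U ∩ desc hT r y} = (∅ : Set α) := by
        ext v
        simp only [Set.mem_setOf_eq, Set.mem_empty_iff_false, iff_false]
        exact hno v
      have h0 : σ y = 0 := by
        simp only [hσ, hempty, wt]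
        simp
      rw [h0] at hy
      linarith
    have hane : Nonempty α := by
      rcases isEmpty_or_nonempty α with hα | hα
      · exfalso
        have h0 : wt ξ {v : α | {x : τ | v ∈ B x} ⊆ U} = 0 := by
          rw [wt]
          apply Finset.sum_eq_zero
          intro v _
          exact (hα.false v).elim
        rw [h0] at hbase
        linarith
      · exact hα
    set F₀ : Finset τ := Finset.univ.biUnion
      (fun v : α => ((pth hT r (t v)).support).toFinset) with hF₀
    set cand := F₀.filter (fun y => w < σ y) with hcand
    have candsub : ∀ y : τ, w < σ y → y ∈ cand := by
      intro y hy
      rw [hcand, Finset.mem_filter]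
      refine ⟨?_, hy⟩
      obtain ⟨v, hv⟩ := candmem y hy
      have hyv : y ∈ (pth hT r (t v)).support := (hv (htB v)).2
      rw [hF₀, Finset.mem_biUnion]
      exact ⟨v, Finset.mem_univ v, List.mem_toFinset.mpr hyv⟩
    have hrcand : r ∈ cand := by
      apply candsub
      have hsame : {v : α | {x : τ | v ∈ B x} ⊆ U ∩ desc hT r r} =
          {v : α | {x : τ | v ∈ B x} ⊆ U} := by
        ext v
        simp only [Set.mem_setOf_eq]
        constructor
        · exact fun h x hx => (h hx).1
        · exact fun h x hx => ⟨h hx, mem_desc_root hT r x⟩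
      show w < wt ξ _
      rw [hsame]
      exact hbase
    obtain ⟨x, hxc, hxmax⟩ :=
      Finset.exists_max_image cand (fun y => (pth hT r y).length) ⟨r, hrcand⟩
    have hxσ : w < σ x := (Finset.mem_filter.mp hxc).2
    have hmax : ∀ y : τ, w < σ y → (pth hT r y).length ≤ (pth hT r x).length :=
      fun y hy => hxmax y (candsub y hy)
    have hdisj : Disjoint {v : α | {x' : τ | v ∈ B x'} ⊆ U \ desc hT r x}
        {v : α | {x' : τ | v ∈ B x'} ⊆ U ∩ desc hT r x} := by
      rw [Set.disjoint_left]
      intro v hv1 hv2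
      exact (hv1 (htB v)).2 (hv2 (htB v)).2
    have hsub : {v : α | {x' : τ | v ∈ B x'} ⊆ U \ desc hT r x} ∪
        {v : α | {x' : τ | v ∈ B x'} ⊆ U ∩ desc hT r x} ⊆
        {v : α | {x' : τ | v ∈ B x'} ⊆ U} := by
      intro v hv
      rcases hv with hv | hv
      · exact fun x' hx' => (hv hx').1
      · exact fun x' hx' => (hv hx').1
    have hU' : wt ξ {v : α | {x' : τ | v ∈ B x'} ⊆ U \ desc hT r x} ≤ (k + 1) * w := by
      have hle := wt_mono ξ hξ hsub
      have heq := wt_union_disjoint ξ hdisj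
      have hxσ' : w < wt ξ {v : α | {x' : τ | v ∈ B x'} ⊆ U ∩ desc hT r x} := hxσ
      have hU2 : wt ξ {v : α | {x : τ | v ∈ B x} ⊆ U} ≤ ((k : ℝ) + 1 + 1) * w := by
        calc wt ξ {v : α | {x : τ | v ∈ B x} ⊆ U} ≤ ((k + 1 : ℕ) + 1) * w := hU
        _ = ((k : ℝ) + 1 + 1) * w := by push_cast; ring
      have : ((k : ℕ) + 1 : ℝ) * w = (k : ℝ) * w + w := by push_cast; ring
      push_cast
      linarith
    obtain ⟨F', hF'card, hF'⟩ := ih (U \ desc hT r x) hU'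
    refine ⟨insert x F', ?_, ?_⟩
    · calc (insert x F').card ≤ F'.card + 1 := Finset.card_insert_le _ _
      _ ≤ k + 1 := by omega
    intro C h1 h2 h3
    by_cases hsplit : ∀ v ∈ C, ∀ y ∈ {x' : τ | v ∈ B x'}, y ∉ desc hT r x
    · apply hF' C
      · exact fun v hv x' hx' => ⟨h1 v hv hx', hsplit v hv x' hx'⟩
      · exact fun v hv y hy => h2 v hv y (Finset.mem_insert_of_mem hy)
      · exact h3
    push_neg at hsplit
    obtain ⟨v₀, hv₀C, a, haS, hadesc⟩ := hsplit
    have hxnot : ∀ v ∈ C, x ∉ {x' : τ | v ∈ B x'} := fun v hv hmem =>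
      h2 v hv x (Finset.mem_insert_self x F') hmem
    have hstep1base : ∀ v ∈ C, (∃ a' ∈ {x' : τ | v ∈ B x'}, a' ∈ desc hT r x) →
        {x' : τ | v ∈ B x'} ⊆ desc hT r x := by
      rintro v hv ⟨a', ha'S, ha'd⟩ b hbS
      obtain ⟨p, hp⟩ := connected_walk (hbc v) ha'S hbS
      exact walk_desc hT p (fun hmem => hxnot v hv (hp x hmem)) ha'd
    have hstep1 : ∀ v ∈ C, {x' : τ | v ∈ B x'} ⊆ desc hT r x := by
      have key : ∀ {u u' : α} (p : H.Walk u u'), (∀ y ∈ p.support, y ∈ C) →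
          {x' : τ | u ∈ B x'} ⊆ desc hT r x → {x' : τ | u' ∈ B x'} ⊆ desc hT r x := by
        intro u u' p
        induction p with
        | nil => exact fun _ h => h
        | @cons u m u' hadj q ihp =>
          intro hsupC hu
          obtain ⟨y, hyu, hym⟩ := hcov _ _ hadj
          have hmC : m ∈ C := hsupC _ (by
            rw [Walk.support_cons]; exact List.mem_cons_of_mem _ q.start_mem_support)
          have hm : {x' : τ | m ∈ B x'} ⊆ desc hT r x :=
            hstep1base m hmC ⟨y, hym, hu hyu⟩
          exact ihp (fun y' hy' => hsupC y' (by
            rw [Walk.support_cons]; exact List.mem_cons_of_mem _ hy')) hm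
      intro v hv
      obtain ⟨p, hp⟩ := h3 v₀ hv₀C v hv
      exact key p hp (hstep1base v₀ hv₀C ⟨a, haS, hadesc⟩)
    have hax : x ≠ a := fun h => hxnot v₀ hv₀C (h ▸ haS)
    obtain ⟨z, hxz, hzmem, hznot⟩ := exists_succ hT hadesc hax
    have hzdx : z ∈ desc hT r x := nbr_desc hT hxz hznot
    have hzdepth : (pth hT r x).length < (pth hT r z).length := by
      have hx' : x ∈ (pth hT r z).support := hzdx
      have hlen := congrArg Walk.length ((pth hT r z).take_spec hx')
      rw [Walk.length_append, take_eq hT hx', drop_eq hT hx'] at hlen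
      have hne : (pth hT x z).length ≠ 0 := fun h0 => hxz.ne (Walk.eq_of_length_eq_zero h0)
      omega
    have hσz : σ z ≤ w := by
      by_contra hcon
      push_neg at hcon
      exact absurd (hmax z hcon) (by omega)
    have hstep3base : ∀ v ∈ C, (∃ a' ∈ {x' : τ | v ∈ B x'}, a' ∈ desc hT r z) →
        {x' : τ | v ∈ B x'} ⊆ desc hT r z := by
      rintro v hv ⟨a', ha'S, ha'd⟩ b hbS
      obtain ⟨p, hp⟩ := connected_walk (hbc v) ha'S hbS
      refine walk_branch hT hxz p ?_ ha'd
      intro u hu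
      exact ⟨hstep1 v hv (hp u hu), fun h => hxnot v hv (h ▸ hp u hu)⟩
    have hstep3 : ∀ v ∈ C, {x' : τ | v ∈ B x'} ⊆ desc hT r z := by
      have key : ∀ {u u' : α} (p : H.Walk u u'), (∀ y ∈ p.support, y ∈ C) →
          {x' : τ | u ∈ B x'} ⊆ desc hT r z → {x' : τ | u' ∈ B x'} ⊆ desc hT r z := by
        intro u u' p
        induction p with
        | nil => exact fun _ h => h
        | @cons u m u' hadj q ihp =>
          intro hsupC hu
          obtain ⟨y, hyu, hym⟩ := hcov _ _ hadj
          have hmC : m ∈ C := hsupC _ (by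
            rw [Walk.support_cons]; exact List.mem_cons_of_mem _ q.start_mem_support)
          have hm : {x' : τ | m ∈ B x'} ⊆ desc hT r z :=
            hstep3base m hmC ⟨y, hym, hu hyu⟩
          exact ihp (fun y' hy' => hsupC y' (by
            rw [Walk.support_cons]; exact List.mem_cons_of_mem _ hy')) hm
      intro v hv
      obtain ⟨p, hp⟩ := h3 v₀ hv₀C v hv
      have hv₀z : {x' : τ | v₀ ∈ B x'} ⊆ desc hT r z :=
        hstep3base v₀ hv₀C ⟨a, haS, hzmem⟩
      exact key p hp hv₀z
    have hCsub : C ⊆ {v : α | {x' : τ | v ∈ B x'} ⊆ U ∩ desc hT r z} :=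
      fun v hv x' hx' => ⟨h1 v hv hx', hstep3 v hv hx'⟩
    exact le_trans (wt_mono ξ hξ hCsub) hσz

end WSepAux

/-- **Lemma.** Let `(B_x)_{x ∈ V(T)}` be a tree-decomposition of a graph `H` and let
`ξ : V(H) → ℝ` be non-negative.  For every positive integer `c` there is a set `S ⊆ V(T)`
with `|S| ≤ c − 1` such that every connected component `C` of `H − ⋃_{x ∈ S} B_x` has weight
`ξ(C) ≤ ξ(H)/c`. -/
theorem weighted_separator
    (α τ : Type) [Fintype α] (H : SimpleGraph α) (T : SimpleGraph τ) (B : τ → Set α)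
    (hTD : IsTreeDecomp H T B) (ξ : α → ℝ) (hξ : ∀ v, 0 ≤ ξ v) (c : ℕ) (hc : 0 < c) :
    ∃ S : Set τ, S.Finite ∧ S.ncard ≤ c - 1 ∧
      ∀ C : (H.induce (⋃ x ∈ S, B x)ᶜ).ConnectedComponent,
        (∑ᶠ v ∈ C.supp, ξ (v : α)) ≤ (∑ v : α, ξ v) / c := by
  classical
  obtain ⟨hT, hcov, hbc⟩ := hTD
  obtain ⟨r⟩ : Nonempty τ := hT.isConnected.nonempty
  have htot0 : 0 ≤ ∑ v : α, ξ v := Finset.sum_nonneg fun v _ => hξ v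
  rcases eq_or_lt_of_le htot0 with hzero | hpos
  · -- total weight is zero: the empty set of bags works
    refine ⟨∅, Set.finite_empty, by simp, ?_⟩
    intro C
    have hall : ∀ v : α, ξ v = 0 := by
      intro v
      exact (Finset.sum_eq_zero_iff_of_nonneg (fun v _ => hξ v)).mp hzero.symm v
        (Finset.mem_univ v)
    have hz : (∑ᶠ v ∈ C.supp, ξ (v : α)) = 0 := by
      simp [hall]
    rw [hz, ← hzero]
    simp
  · have hc' : (0 : ℝ) < c := Nat.cast_pos.mpr hc
    have hw : 0 < (∑ v : α, ξ v) / c := div_pos hpos hc'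
    have hbound : WSepAux.wt ξ {v : α | {x : τ | v ∈ B x} ⊆ (Set.univ : Set τ)} ≤
        ((c - 1 : ℕ) + 1) * ((∑ v : α, ξ v) / c) := by
      have huniv : {v : α | {x : τ | v ∈ B x} ⊆ (Set.univ : Set τ)} = Set.univ := by
        ext v; simp
      rw [huniv, WSepAux.wt_univ]
      have hcast : ((c - 1 : ℕ) + 1 : ℝ) = (c : ℝ) := by
        have : (c - 1) + 1 = c := Nat.succ_pred_eq_of_pos hc
        exact_mod_cast congrArg (Nat.cast (R := ℝ)) this
      rw [hcast, mul_div_cancel₀ _ (ne_of_gt hc')]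
    obtain ⟨F, hFcard, hF⟩ := WSepAux.aux hT r H B hcov hbc ξ hξ hw (c - 1) Set.univ hbound
    refine ⟨(F : Set τ), F.finite_toSet, by simpa [Set.ncard_coe_finset] using hFcard, ?_⟩
    set s : Set α := ⋃ x ∈ (F : Set τ), B x with hs
    intro C
    set C' : Set α := Subtype.val '' C.supp with hC'
    have hwtC : WSepAux.wt ξ C' ≤ (∑ v : α, ξ v) / c := by
      apply hF C'
      · exact fun v _ => Set.subset_univ _
      · rintro v ⟨u, huC, rfl⟩ x hxF hvB
        exact u.2 (Set.mem_biUnion (by exact_mod_cast hxF) hvB)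
      · rintro u' ⟨u, huC, rfl⟩ v' ⟨v, hvC, rfl⟩
        have hre : (H.induce sᶜ).Reachable u v := by
          rw [ConnectedComponent.mem_supp_iff] at huC hvC
          exact ConnectedComponent.exact (huC.trans hvC.symm)
        obtain ⟨W⟩ := hre
        refine ⟨W.map (SimpleGraph.Embedding.induce sᶜ).toHom, ?_⟩
        intro y hy
        erw [Walk.support_map, List.mem_map] at hy
        obtain ⟨y₀, hy₀, rfl⟩ := hy
        refine ⟨y₀, ?_, rfl⟩
        rw [ConnectedComponent.mem_supp_iff] at huC ⊢
        rw [← huC]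
        exact ConnectedComponent.sound ⟨(W.takeUntil y₀ hy₀).reverse⟩
    have him : (∑ᶠ v ∈ C.supp, ξ (v : α)) = WSepAux.wt ξ C' := by
      have h1 := finsum_mem_image (f := ξ) (g := (Subtype.val : ↥sᶜ → α)) (s := C.supp)
        (Subtype.val_injective.injOn)
      rw [← h1, ← hC']
      conv_lhs => rw [← Set.Finite.coe_toFinset (Set.toFinite C')]
      rw [finsum_mem_coe_finset, WSepAux.wt]
    rw [him]
    exact hwtC
end

section
/- For every real number D and integer n with 1 ≤ D ≤ n, every n-vertex t-Baker graph G contains a set X ⊆ V(G) with |X| ≤ (18·t·n·log n)/D such that G−X has local density at most D. -/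
open SimpleGraph

/-- The local density of `G` is at most `D`: every ball of radius `r > 0` has at most
`D·r + 1` vertices. -/
def LocalDensityLE {α : Type} (G : SimpleGraph α) (D : ℝ) : Prop :=
  ∀ (v : α) (r : ℝ), 0 < r →
    (Nat.card {w : α | G.Reachable v w ∧ (G.dist v w : ℝ) ≤ r} : ℝ) - 1 ≤ D * r

/-- A layering of `G`: a partition of the vertices into integer-indexed (possibly empty)
layers such that the endpoints of every edge lie in the same or consecutive layers. -/
def IsLayering {α : Type} (G : SimpleGraph α) (L : ℤ → Set α) : Prop :=
  (∀ v : α, ∃! s : ℤ, v ∈ L s) ∧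
  ∀ u v : α, G.Adj u v → ∀ i j : ℤ, u ∈ L i → v ∈ L j → |i - j| ≤ 1

/-- A `t`-Baker layering: any `r` consecutive layers induce a subgraph of treewidth at most
`r·t − 1` (equivalently, with a tree decomposition whose bags have at most `r·t` vertices). -/
def IsTBakerLayering {α : Type} (G : SimpleGraph α) (t : ℕ) (L : ℤ → Set α) : Prop :=
  IsLayering G L ∧
  ∀ (s : ℤ) (r : ℕ),
    HasTreeDecompBagsLE (G.induce (⋃ i ∈ Finset.range r, L (s + i))) (r * t)

/-- `G` is `t`-Baker. -/
def IsTBaker {α : Type} (G : SimpleGraph α) (t : ℕ) : Prop :=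
  ∃ L : ℤ → Set α, IsTBakerLayering G t L

set_option linter.unusedSectionVars false
set_option maxHeartbeats 1000000

namespace BakerProof


variable {τ : Type} {T : SimpleGraph τ}

/-- auxiliary: concat of a path avoiding the new endpoint is a path -/
lemma isPath_concat {u v w : τ} {p : T.Walk u v} (hp : p.IsPath) (h : T.Adj v w)
    (hw : w ∉ p.support) : (p.concat h).IsPath := by
  rw [Walk.concat_eq_append]
  rw [Walk.isPath_def] at hp ⊢
  rw [Walk.support_append]
  simp only [Walk.support_cons, Walk.support_nil, List.tail_cons]
  rw [List.nodup_append]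
  refine ⟨hp, List.nodup_singleton _, ?_⟩
  intro a ha b hb hab
  simp only [List.mem_singleton] at hb
  subst hb
  exact hw (hab ▸ ha)

section Rooted

variable (hT : T.IsTree) (ρ : τ)

/-- the unique path from the root to `y`. -/
noncomputable def rpath (y : τ) : T.Walk ρ y := (hT.existsUnique_path ρ y).choose

lemma rpath_isPath (y : τ) : (rpath hT ρ y).IsPath := (hT.existsUnique_path ρ y).choose_spec.1

lemma rpath_unique {y : τ} (p : T.Walk ρ y) (hp : p.IsPath) : p = rpath hT ρ y :=
  (hT.existsUnique_path ρ y).choose_spec.2 p hp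

/-- descendants of x (including x): vertices whose root-path passes through x -/
def desc (x : τ) : Set τ := {y | x ∈ (rpath hT ρ y).support}

variable [DecidableEq τ]

lemma rpath_takeUntil {x y : τ} (h : x ∈ (rpath hT ρ y).support) :
    (rpath hT ρ y).takeUntil x h = rpath hT ρ x :=
  rpath_unique hT ρ _ ((rpath_isPath hT ρ y).takeUntil h)

lemma self_mem_desc (x : τ) : x ∈ desc hT ρ x := Walk.end_mem_support _

lemma mem_desc_root (y : τ) : y ∈ desc hT ρ ρ := Walk.start_mem_support _

lemma desc_trans {x y z : τ} (hy : y ∈ desc hT ρ x) (hz : z ∈ desc hT ρ y) :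
    z ∈ desc hT ρ x := by
  have := rpath_takeUntil hT ρ hz
  have hsub := Walk.support_takeUntil_subset (rpath hT ρ z) hz
  rw [this] at hsub
  exact hsub hy

/-- depth of a node -/
noncomputable def depth (y : τ) : ℕ := (rpath hT ρ y).length

lemma depth_le_of_mem_desc {x y : τ} (h : y ∈ desc hT ρ x) :
    depth hT ρ x ≤ depth hT ρ y := by
  have := rpath_takeUntil hT ρ h
  have hl := Walk.length_takeUntil_le (rpath hT ρ y) h
  rw [this] at hl
  exact hl

/-- structure of root-paths across an edge -/
lemma adj_rpath_cases {u w : τ} (h : T.Adj u w) :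
    (w ∉ (rpath hT ρ u).support ∧ rpath hT ρ w = (rpath hT ρ u).concat h) ∨
    (w ∈ (rpath hT ρ u).support ∧ rpath hT ρ u = (rpath hT ρ w).concat h.symm) := by
  by_cases hw : w ∈ (rpath hT ρ u).support
  · right
    refine ⟨hw, ?_⟩
    have hdrop : (rpath hT ρ u).dropUntil w hw = Walk.cons h.symm Walk.nil := by
      have h1 : ((rpath hT ρ u).dropUntil w hw).IsPath := (rpath_isPath hT ρ u).dropUntil hw
      have h2 : (Walk.cons h.symm (Walk.nil : T.Walk u u)).IsPath := by
        simp [Walk.cons_isPath_iff, h.ne']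
      -- both are paths from w to u in a tree
      have := hT.IsAcyclic.path_unique ⟨_, h1⟩ ⟨_, h2⟩
      exact congrArg Subtype.val this
    have hspec := (rpath hT ρ u).take_spec hw
    rw [hdrop, rpath_takeUntil hT ρ hw] at hspec
    rw [← hspec]
    rfl
  · left
    refine ⟨hw, ?_⟩
    exact (rpath_unique hT ρ _ (isPath_concat (rpath_isPath hT ρ u) h hw)).symm

/-- each non-root-path member has a child through which it descends -/
lemma exists_child {x u : τ} (hu : u ∈ desc hT ρ x) (hne : u ≠ x) :
    ∃ y, ∃ hadj : T.Adj x y, y ∈ desc hT ρ x ∧ depth hT ρ y = depth hT ρ x + 1 ∧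
      rpath hT ρ y = (rpath hT ρ x).concat hadj ∧ u ∈ desc hT ρ y := by
  classical
  have hx : x ∈ (rpath hT ρ u).support := hu
  have hspec := (rpath hT ρ u).take_spec hx
  set d := (rpath hT ρ u).dropUntil x hx with hd
  clear_value d
  cases d with
  | nil => exact absurd rfl hne
  | @cons _ y _ hadj tail =>
    refine ⟨y, hadj, ?_, ?_, ?_, ?_⟩
    all_goals {
      have hycase := adj_rpath_cases hT ρ hadj
      have hynotin : y ∉ (rpath hT ρ x).support := by
        intro hyx
        -- y would appear twice in the path rpath u
        have hnodup := (rpath_isPath hT ρ u).support_nodup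
        rw [← hspec, Walk.support_append] at hnodup
        rw [List.nodup_append] at hnodup
        have hy2 : y ∈ (Walk.cons hadj tail).support.tail := by
          simp [Walk.support_cons]
        refine hnodup.2.2 y ?_ y hy2 rfl
        have : (rpath hT ρ u).takeUntil x hx = rpath hT ρ x := rpath_takeUntil hT ρ hx
        rw [this]
        exact hyx
      have hry : rpath hT ρ y = (rpath hT ρ x).concat hadj := by
        rcases hycase with ⟨_, h2⟩ | ⟨h1, _⟩
        · exact h2
        · exact absurd h1 hynotin
      have hydesc : y ∈ desc hT ρ x := by
        show x ∈ (rpath hT ρ y).support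
        rw [hry, Walk.concat_eq_append, Walk.mem_support_append_iff]
        left; exact Walk.end_mem_support _
      have hdepth : depth hT ρ y = depth hT ρ x + 1 := by
        unfold depth
        rw [hry, Walk.length_concat]
      have hudesc : u ∈ desc hT ρ y := by
        show y ∈ (rpath hT ρ u).support
        rw [← hspec, Walk.mem_support_append_iff]
        right; simp [Walk.support_cons]
      first
        | exact hydesc
        | exact hdepth
        | exact hry
        | exact hudesc
    }

/-- a child: the root path of `y` extends that of `x` by the edge. -/
def IsChild (x y : τ) : Prop := ∃ hadj : T.Adj x y, rpath hT ρ y = (rpath hT ρ x).concat hadj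

lemma IsChild.mem_desc {x y : τ} (h : IsChild hT ρ x y) : y ∈ desc hT ρ x := by
  obtain ⟨hadj, hry⟩ := h
  show x ∈ (rpath hT ρ y).support
  rw [hry, Walk.support_concat]
  simp [Walk.end_mem_support]

lemma IsChild.depth_eq {x y : τ} (h : IsChild hT ρ x y) :
    depth hT ρ y = depth hT ρ x + 1 := by
  obtain ⟨hadj, hry⟩ := h
  unfold depth
  rw [hry, Walk.length_concat]

/-- concat-injectivity: the penultimate vertex of a path is determined -/
lemma concat_penultimate {x₁ x₂ y : τ} {p₁ : T.Walk ρ x₁} {p₂ : T.Walk ρ x₂}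
    {h₁ : T.Adj x₁ y} {h₂ : T.Adj x₂ y}
    (h : p₁.concat h₁ = p₂.concat h₂) (hl : p₁.length = p₂.length) :
    x₁ = x₂ := by
  have e1 : (p₁.concat h₁).getVert p₁.length = x₁ := by
    rw [Walk.concat_eq_append, Walk.getVert_append]
    simp
  have e2 : (p₂.concat h₂).getVert p₂.length = x₂ := by
    rw [Walk.concat_eq_append, Walk.getVert_append]
    simp
  rw [← e1, ← e2, ← hl, h]

/-- a vertex of a root path at a given index -/
lemma mem_desc_getVert {y z : τ} (h : z ∈ desc hT ρ y) :
    (rpath hT ρ z).getVert (depth hT ρ y) = y := by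
  have hy : y ∈ (rpath hT ρ z).support := h
  have hspec := (rpath hT ρ z).take_spec hy
  have htake := rpath_takeUntil hT ρ hy
  have hlen : ((rpath hT ρ z).takeUntil y hy).length = depth hT ρ y := by
    rw [htake]; rfl
  conv_lhs => rw [← hspec]
  rw [Walk.getVert_append]
  rw [hlen]
  simp

/-- distinct children have disjoint descendant sets -/
lemma child_unique {x y₁ y₂ z : τ} (h₁ : IsChild hT ρ x y₁) (h₂ : IsChild hT ρ x y₂)
    (hz₁ : z ∈ desc hT ρ y₁) (hz₂ : z ∈ desc hT ρ y₂) : y₁ = y₂ := by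
  have e₁ := mem_desc_getVert hT ρ hz₁
  have e₂ := mem_desc_getVert hT ρ hz₂
  rw [h₁.depth_eq] at e₁
  rw [h₂.depth_eq] at e₂
  rw [← e₁, ← e₂]

/-- descendant sets absorb neighbors away from x -/
lemma desc_adj {x a c : τ} (ha : a ∈ desc hT ρ x) (hne : a ≠ x) (hadj : T.Adj a c) :
    c ∈ desc hT ρ x := by
  rcases adj_rpath_cases hT ρ hadj with ⟨_, h2⟩ | ⟨h1, h2⟩
  · show x ∈ (rpath hT ρ c).support
    rw [h2, Walk.support_concat, List.mem_append]
    exact Or.inl ha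
  · -- rpath a = (rpath c).concat
    have hx : x ∈ (rpath hT ρ a).support := ha
    rw [h2, Walk.support_concat, List.mem_append] at hx
    rcases hx with h | h
    · exact h
    · simp at h; exact absurd h.symm hne

/-- a walk from inside desc x to outside passes through x -/
lemma desc_walk_cross {x a b : τ} (p : T.Walk a b) (ha : a ∈ desc hT ρ x)
    (hb : b ∉ desc hT ρ x) : x ∈ p.support := by
  induction p with
  | nil => exact absurd ha hb
  | @cons u c w hadj q ih =>
    by_cases hux : u = x
    · subst hux; exact Walk.start_mem_support _
    · have : c ∈ desc hT ρ x := desc_adj hT ρ ha hux hadj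
      rw [Walk.support_cons]
      exact List.mem_cons_of_mem _ (ih this hb)

/-- the only way out of the descendants of a child is through the parent -/
lemma exit_desc {x y c : τ} (h : IsChild hT ρ x y) (hadj : T.Adj y c)
    (hc : c ∉ desc hT ρ y) : c = x := by
  obtain ⟨hxy, hry⟩ := h
  rcases adj_rpath_cases hT ρ hadj with ⟨_, h2⟩ | ⟨h1, h2⟩
  · exfalso; apply hc
    show y ∈ (rpath hT ρ c).support
    rw [h2, Walk.support_concat, List.mem_append]
    exact Or.inl (Walk.end_mem_support _)
  · -- rpath y = (rpath c).concat hadj.symm  and = (rpath x).concat hxy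
    have := h2.symm.trans hry
    -- (rpath c).concat hadj.symm = (rpath x).concat hxy
    have hlen : (rpath hT ρ c).length = (rpath hT ρ x).length := by
      have := congrArg Walk.length this
      rw [Walk.length_concat, Walk.length_concat] at this
      omega
    exact concat_penultimate (h := this) (hl := hlen)

end Rooted


section Walks

variable {V : Type} {G : SimpleGraph V}

/-- a set is walk-connected (with designated walks inside the set between any two points) -/
def WalkConn (G : SimpleGraph V) (A : Set V) : Prop :=
  ∀ a ∈ A, ∀ b ∈ A, ∃ p : G.Walk a b, ∀ c ∈ p.support, c ∈ A

lemma walk_cross_pair {D : Set V} {a b : V} (p : G.Walk a b) (ha : a ∈ D) (hb : b ∉ D) :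
    ∃ u c, G.Adj u c ∧ u ∈ D ∧ c ∉ D ∧ u ∈ p.support ∧ c ∈ p.support := by
  revert ha hb
  induction p with
  | nil => exact fun ha hb => absurd ha hb
  | @cons u c w hadj q ih =>
    intro ha hb
    by_cases hc : c ∈ D
    · obtain ⟨u', c', h1, h2, h3, h4, h5⟩ := ih hc hb
      exact ⟨u', c', h1, h2, h3, by simp [Walk.support_cons, h4],
        by simp [Walk.support_cons, h5]⟩
    · exact ⟨u, c, hadj, ha, hc, Walk.start_mem_support _,
        by simp [Walk.support_cons, Walk.start_mem_support]⟩

lemma walk_induction {P : V → Prop} {A : Set V}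
    (step : ∀ u w, u ∈ A → w ∈ A → G.Adj u w → P u → P w) {a b : V}
    (p : G.Walk a b) (hsupp : ∀ c ∈ p.support, c ∈ A) (ha : P a) : P b := by
  induction p with
  | nil => exact ha
  | @cons u c w hadj q ih =>
    refine ih (fun x hx => hsupp x (by simp [Walk.support_cons, hx])) ?_
    exact step u c (hsupp u (Walk.start_mem_support _))
      (hsupp c (by simp [Walk.support_cons, Walk.start_mem_support])) hadj ha

end Walks

section Cut

variable {V : Type} [Fintype V] {G : SimpleGraph V}

/-- a tree decomposition covering a set `S` of vertices, with bags of size at most `m` in `S` -/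
def GoodDecomp (G : SimpleGraph V) (S : Set V) (m : ℕ) : Prop :=
  ∃ (τ : Type) (T : SimpleGraph τ) (B : τ → Set V), T.IsTree ∧
    (∀ u v, u ∈ S → v ∈ S → G.Adj u v → ∃ x, u ∈ B x ∧ v ∈ B x) ∧
    (∀ v ∈ S, (T.induce {x | v ∈ B x}).Connected) ∧
    (∀ x, (B x ∩ S).ncard ≤ m)

lemma GoodDecomp.mono {S S' : Set V} {m : ℕ} (h : GoodDecomp G S m) (hsub : S' ⊆ S) :
    GoodDecomp G S' m := by
  obtain ⟨τ, T, B, hT, hcov, hconn, hsmall⟩ := h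
  refine ⟨τ, T, B, hT, fun u v hu hv => hcov u v (hsub hu) (hsub hv),
    fun v hv => hconn v (hsub hv), fun x => le_trans ?_ (hsmall x)⟩
  exact Set.ncard_le_ncard (Set.inter_subset_inter_right _ hsub) (Set.toFinite _)

lemma split {S : Set V} {m s : ℕ} (hdec : GoodDecomp G S m) (hbig : s < S.ncard) :
    ∃ W bag : Set V, W ⊆ S ∧ bag ⊆ S ∧ bag.ncard ≤ m ∧ s + 1 ≤ W.ncard ∧
      (∀ u c, u ∈ W \ bag → c ∈ S \ (W ∪ bag) → ¬G.Adj u c) ∧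
      (∀ A ⊆ W \ bag, WalkConn G A → A.ncard ≤ s) := by
  classical
  obtain ⟨τ, T, B, hT, hcov, hconn, hsmall⟩ := hdec
  have hτ : Nonempty τ := hT.isConnected.nonempty
  obtain ⟨ρ⟩ := hτ
  -- the bag-subtree of a vertex
  set C : V → Set τ := fun v => {x | v ∈ B x} with hC
  have hCne : ∀ v ∈ S, (C v).Nonempty := by
    intro v hv
    have := (hconn v hv).nonempty
    obtain ⟨⟨x, hx⟩⟩ := this
    exact ⟨x, hx⟩
  -- walks inside the bag-subtrees
  have hCwalk : ∀ v ∈ S, ∀ z₁ ∈ C v, ∀ z₂ ∈ C v, ∃ p : T.Walk z₁ z₂,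
      ∀ c ∈ p.support, c ∈ C v := by
    intro v hv z₁ h₁ z₂ h₂
    obtain ⟨p'⟩ := (hconn v hv).preconnected ⟨z₁, h₁⟩ ⟨z₂, h₂⟩
    refine ⟨p'.map (Embedding.induce (C v)).toHom, ?_⟩
    intro c hc
    change c ∈ (p'.map (Embedding.induce (C v)).toHom).support at hc
    rw [Walk.support_map, List.mem_map] at hc
    obtain ⟨⟨c', hc'⟩, _, rfl⟩ := hc
    exact hc'
  set Wt : τ → Set V := fun x => {v ∈ S | C v ⊆ desc hT ρ x} with hWt
  set Γ : Set τ := {x | s < (Wt x).ncard} with hΓ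
  have hρΓ : ρ ∈ Γ := by
    have : Wt ρ = S := by
      ext v
      simp only [hWt, Set.mem_setOf_eq, Set.mem_sep_iff]
      exact ⟨fun h => h.1, fun h => ⟨h, fun z _ => mem_desc_root hT ρ z⟩⟩
    simpa [hΓ, this] using hbig
  -- pick representatives in bag-subtrees
  choose zrep hzrep using fun (v : V) (hv : v ∈ S) => hCne v hv
  -- depth is bounded on Γ
  have hdepthbd : BddAbove (depth hT ρ '' Γ) := by
    refine ⟨(S.toFinite.toFinset.attach.sup
      (fun v => depth hT ρ (zrep v.1 ((Set.Finite.mem_toFinset _).mp v.2)))), ?_⟩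
    rintro d ⟨x, hxΓ, rfl⟩
    have hxΓ' : s < (Wt x).ncard := hxΓ
    have hne : (Wt x).Nonempty := Set.nonempty_of_ncard_ne_zero (by omega)
    obtain ⟨v, hvWt⟩ := hne
    obtain ⟨hvS, hsub⟩ := hvWt
    have hz := hzrep v hvS
    have h1 : depth hT ρ x ≤ depth hT ρ (zrep v hvS) :=
      depth_le_of_mem_desc hT ρ (hsub hz)
    refine le_trans h1 ?_
    have hmem : v ∈ S.toFinite.toFinset := (Set.Finite.mem_toFinset _).mpr hvS
    exact Finset.le_sup (f := fun v : {x // x ∈ S.toFinite.toFinset} =>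
      depth hT ρ (zrep v.1 ((Set.Finite.mem_toFinset _).mp v.2)))
      (Finset.mem_attach _ ⟨v, hmem⟩)
  have hΓne : (depth hT ρ '' Γ).Nonempty := ⟨_, ⟨ρ, hρΓ, rfl⟩⟩
  have hmax := Nat.sSup_mem hΓne hdepthbd
  rw [Set.mem_image] at hmax
  obtain ⟨x₀, hx₀Γ, hx₀d⟩ := hmax
  -- x₀ : the deepest node of Γ
  refine ⟨Wt x₀, B x₀ ∩ S, fun v hv => hv.1, Set.inter_subset_right, hsmall x₀, hx₀Γ, ?_, ?_⟩
  · -- no edges out of Wt x₀ except via the bag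
    rintro u c ⟨huW, hub⟩ ⟨hcS, hcWb⟩ hadj
    obtain ⟨huS, husub⟩ := huW
    have hunb : u ∉ B x₀ := fun h => hub ⟨h, huS⟩
    obtain ⟨zb, hzu, hzc⟩ := hcov u c huS hcS hadj
    have hzdesc : zb ∈ desc hT ρ x₀ := husub hzu
    have hcnW : c ∉ Wt x₀ := fun h => hcWb (Or.inl h)
    have hcnb : c ∉ B x₀ := fun h => hcWb (Or.inr ⟨h, hcS⟩)
    -- C c contains zb ∈ desc x₀ but is not contained in desc x₀
    have : ¬ (C c ⊆ desc hT ρ x₀) := fun h => hcnW ⟨hcS, h⟩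
    rw [Set.not_subset] at this
    obtain ⟨z', hz'C, hz'nd⟩ := this
    obtain ⟨p, hp⟩ := hCwalk c hcS zb hzc z' hz'C
    have := desc_walk_cross hT ρ p hzdesc hz'nd
    exact hcnb (hp x₀ this)
  · -- connected subsets of Wt x₀ minus the bag are small
    intro A hA hAconn
    rcases Set.eq_empty_or_nonempty A with rfl | ⟨a₀, ha₀⟩
    · simp
    have hprop : ∀ a ∈ A, a ∈ S ∧ C a ⊆ desc hT ρ x₀ ∧ x₀ ∉ C a := by
      intro a ha
      obtain ⟨⟨haS, hasub⟩, hanb⟩ := hA ha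
      exact ⟨haS, hasub, fun h => hanb ⟨h, haS⟩⟩
    -- each vertex of A determines a child of x₀
    have hchild : ∀ a ∈ A, ∃ y, IsChild hT ρ x₀ y ∧ C a ⊆ desc hT ρ y := by
      intro a ha
      obtain ⟨haS, hasub, hanb⟩ := hprop a ha
      obtain ⟨z₀, hz₀⟩ := hCne a haS
      have hz₀ne : z₀ ≠ x₀ := fun h => hanb (h ▸ hz₀)
      obtain ⟨y, hadj, hydesc, hdepth, hry, hz₀y⟩ := exists_child hT ρ (hasub hz₀) hz₀ne
      refine ⟨y, ⟨hadj, hry⟩, ?_⟩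
      -- all of C a is inside desc y
      intro z hz
      by_contra hzny
      obtain ⟨p, hp⟩ := hCwalk a haS z₀ hz₀ z hz
      obtain ⟨u', c', hadj', hu'D, hc'D, hu'supp, hc'supp⟩ := walk_cross_pair p hz₀y hzny
      by_cases hu'y : u' = y
      · subst hu'y
        have hcx : c' = x₀ := exit_desc hT ρ ⟨hadj, hry⟩ hadj' hc'D
        exact hanb (by rw [← hcx]; exact hp c' hc'supp)
      · exact hc'D (desc_adj hT ρ hu'D hu'y hadj')
    choose ych hychild hysub using hchild
    -- the child is constant along A
    have hconst : ∀ a (ha : a ∈ A), ych a ha = ych a₀ ha₀ := by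
      intro a ha
      obtain ⟨p, hp⟩ := hAconn a₀ ha₀ a ha
      -- prove by walk induction that the child containing C b equals ych a₀
      have key : ∀ b, (∃ hb : b ∈ A, ych b hb = ych a₀ ha₀) → b ∈ A := fun b hb => hb.1
      -- use walk_induction with P b := ∃ hb…
      have := walk_induction (P := fun b => ∃ hb : b ∈ A, ych b hb = ych a₀ ha₀)
        (A := A) ?_ p hp ⟨ha₀, rfl⟩
      · obtain ⟨hb, h⟩ := this
        exact h
      · intro u w hu hw hadj ⟨hu', hueq⟩
        refine ⟨hw, ?_⟩
        obtain ⟨huS, _, _⟩ := hprop u hu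
        obtain ⟨hwS, _, _⟩ := hprop w hw
        obtain ⟨zb, hzu, hzw⟩ := hcov u w huS hwS hadj
        have h1 : zb ∈ desc hT ρ (ych u hu') := hysub u hu' hzu
        have h2 : zb ∈ desc hT ρ (ych w hw) := hysub w hw hzw
        have := child_unique hT ρ (hychild w hw) (hychild u hu') h2 h1
        rw [this, hueq]
    -- A is inside Wt (ych a₀)
    set y₀ := ych a₀ ha₀ with hy₀
    have hAsub : A ⊆ Wt y₀ := by
      intro a ha
      obtain ⟨haS, _, _⟩ := hprop a ha
      refine ⟨haS, ?_⟩
      have := hconst a ha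
      rw [← this]
      exact hysub a ha
    -- Wt y₀ is small since y₀ is deeper than x₀
    have hy₀nΓ : y₀ ∉ Γ := by
      intro hy₀Γ
      have h1 : depth hT ρ y₀ ≤ sSup (depth hT ρ '' Γ) :=
        le_csSup hdepthbd ⟨y₀, hy₀Γ, rfl⟩
      have h2 : depth hT ρ y₀ = depth hT ρ x₀ + 1 := (hychild a₀ ha₀).depth_eq
      omega
    have : (Wt y₀).ncard ≤ s := by
      by_contra h
      exact hy₀nΓ (by simpa [hΓ] using Nat.lt_of_not_le h)
    exact le_trans (Set.ncard_le_ncard hAsub (Set.toFinite _)) this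

/-- The cutting lemma: a graph with a tree decomposition with bags of size `≤ m`
can be cut into pieces of size `≤ s` by removing few vertices. -/
lemma cut {m s : ℕ} : ∀ (N : ℕ) (S : Set V), S.ncard ≤ N → GoodDecomp G S m →
    ∃ X : Set V, X ⊆ S ∧ (s+1) * X.ncard ≤ m * S.ncard ∧
      ∀ A ⊆ S \ X, WalkConn G A → A.ncard ≤ s := by
  intro N
  induction N with
  | zero =>
    intro S hS _
    refine ⟨∅, Set.empty_subset _, by simp, ?_⟩
    intro A hA _
    have : A ⊆ S := fun a ha => (hA ha).1
    calc A.ncard ≤ S.ncard := Set.ncard_le_ncard this (Set.toFinite _)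
      _ ≤ s := by omega
  | succ N ih =>
    intro S hS hdec
    by_cases hsmall : S.ncard ≤ s
    · refine ⟨∅, Set.empty_subset _, by simp, ?_⟩
      intro A hA _
      have : A ⊆ S := fun a ha => (hA ha).1
      exact le_trans (Set.ncard_le_ncard this (Set.toFinite _)) hsmall
    push_neg at hsmall
    obtain ⟨W, bag, hWS, hbagS, hbagcard, hWcard, hnoedge, hpieces⟩ := split hdec hsmall
    set S' := S \ (W ∪ bag) with hS'
    have hS'sub : S' ⊆ S := Set.diff_subset
    have hS'card : S'.ncard + (s+1) ≤ S.ncard := by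
      have hsub : W ∪ bag ⊆ S := Set.union_subset hWS hbagS
      have h1 : S'.ncard = S.ncard - (W ∪ bag).ncard :=
        Set.ncard_diff hsub (Set.toFinite _)
      have h2 : (W ∪ bag).ncard ≥ s + 1 :=
        le_trans hWcard (Set.ncard_le_ncard Set.subset_union_left (Set.toFinite _))
      have h3 : (W ∪ bag).ncard ≤ S.ncard := Set.ncard_le_ncard hsub (Set.toFinite _)
      omega
    have hS'N : S'.ncard ≤ N := by omega
    obtain ⟨X', hX'sub, hX'card, hX'pieces⟩ := ih S' hS'N (hdec.mono hS'sub)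
    refine ⟨bag ∪ X', Set.union_subset hbagS (fun x hx => hS'sub (hX'sub hx)), ?_, ?_⟩
    · have h1 : (bag ∪ X').ncard ≤ bag.ncard + X'.ncard :=
        Set.ncard_union_le _ _
      have h2 : (s+1) * (bag ∪ X').ncard ≤ (s+1) * bag.ncard + (s+1) * X'.ncard := by
        calc (s+1) * (bag ∪ X').ncard ≤ (s+1) * (bag.ncard + X'.ncard) :=
              Nat.mul_le_mul_left _ h1
          _ = (s+1) * bag.ncard + (s+1) * X'.ncard := by ring
      calc (s+1) * (bag ∪ X').ncard ≤ (s+1) * bag.ncard + (s+1) * X'.ncard := h2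
        _ ≤ (s+1) * m + m * S'.ncard := by
            have := Nat.mul_le_mul_left (s+1) hbagcard
            omega
        _ = m * ((s+1) + S'.ncard) := by ring
        _ ≤ m * S.ncard := Nat.mul_le_mul_left _ (by omega)
    · intro A hA hAconn
      by_cases hAW : (A ∩ W).Nonempty
      · -- A is inside W \ bag
        have hAsub : A ⊆ W \ bag := by
          obtain ⟨a, haA, haW⟩ := hAW
          intro b hbA
          have hbX : b ∉ bag ∪ X' := (hA hbA).2
          have hbbag : b ∉ bag := fun h => hbX (Or.inl h)
          by_cases hbW : b ∈ W
          · exact ⟨hbW, hbbag⟩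
          exfalso
          obtain ⟨p, hp⟩ := hAconn a haA b hbA
          obtain ⟨u', c', hadj', hu'W, hc'W, hu's, hc's⟩ := walk_cross_pair p haW hbW
          have hu'A := hp u' hu's
          have hc'A := hp c' hc's
          have hu'X : u' ∉ bag ∪ X' := (hA hu'A).2
          have hc'X : c' ∉ bag ∪ X' := (hA hc'A).2
          refine hnoedge u' c' ⟨hu'W, fun h => hu'X (Or.inl h)⟩
            ⟨(hA hc'A).1, fun h => ?_⟩ hadj'
          rcases h with h | h
          · exact hc'W h
          · exact hc'X (Or.inl h)
        exact hpieces A hAsub hAconn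
      · -- A is inside S' \ X'
        rw [Set.not_nonempty_iff_eq_empty] at hAW
        refine hX'pieces A ?_ hAconn
        intro a ha
        have haS : a ∈ S := (hA ha).1
        have haX : a ∉ bag ∪ X' := (hA ha).2
        have haW : a ∉ W := fun h => by
          have : a ∈ A ∩ W := ⟨ha, h⟩
          rw [hAW] at this
          exact this
        refine ⟨⟨haS, fun h => ?_⟩, fun h => haX (Or.inr h)⟩
        rcases h with h | h
        · exact haW h
        · exact haX (Or.inl h)

end Cut



section Outer

variable {V : Type} [Fintype V] {G : SimpleGraph V}

/-- counting: ncard of finite unions -/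
lemma ncard_biUnion_le {ι : Type} (s : Finset ι) (f : ι → Set V) :
    (⋃ i ∈ s, f i).ncard ≤ ∑ i ∈ s, (f i).ncard := by
  classical
  induction s using Finset.induction with
  | empty => simp
  | @insert a s ha ih =>
    rw [Finset.set_biUnion_insert, Finset.sum_insert ha]
    exact le_trans (Set.ncard_union_le _ _) (by omega)

lemma sum_ncard_le {ι : Type} (s : Finset ι) (f : ι → Set V)
    (hdisj : ∀ i ∈ s, ∀ j ∈ s, i ≠ j → Disjoint (f i) (f j)) :
    ∑ i ∈ s, (f i).ncard ≤ Fintype.card V := by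
  classical
  have key : ∑ i ∈ s, (f i).ncard = (⋃ i ∈ s, f i).ncard := by
    induction s using Finset.induction with
    | empty => simp
    | @insert a s ha ih =>
      rw [Finset.set_biUnion_insert, Finset.sum_insert ha]
      rw [ih (fun i hi j hj hij => hdisj i (Finset.mem_insert_of_mem hi)
        j (Finset.mem_insert_of_mem hj) hij)]
      rw [Set.ncard_union_eq ?_ (Set.toFinite _) (Set.toFinite _)]
      rw [Set.disjoint_iff_inter_eq_empty]
      ext x
      simp only [Set.mem_inter_iff, Set.mem_iUnion, Set.mem_empty_iff_false, iff_false,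
        not_and, not_exists]
      intro hxa i hi
      exact fun hxi => (hdisj a (Finset.mem_insert_self a s) i (Finset.mem_insert_of_mem hi)
        (fun h => ha (h ▸ hi))).ne_of_mem hxa hxi rfl
  calc ∑ i ∈ s, (f i).ncard = (⋃ i ∈ s, f i).ncard := key
    _ ≤ (Set.univ : Set V).ncard := Set.ncard_le_ncard (Set.subset_univ _) (Set.toFinite _)
    _ = Fintype.card V := by rw [Set.ncard_univ, Nat.card_eq_fintype_card]

/-- conversion from subtype tree decompositions to ambient ones -/
lemma goodDecomp_of_hasTreeDecomp {U : Set V} {m : ℕ}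
    (h : HasTreeDecompBagsLE (G.induce U) m) : GoodDecomp G U m := by
  obtain ⟨τ, T, B, ⟨hT, hcov, hconn⟩, hsize⟩ := h
  refine ⟨τ, T, fun x => Subtype.val '' B x, hT, ?_, ?_, ?_⟩
  · intro u v hu hv hadj
    have : (G.induce U).Adj ⟨u, hu⟩ ⟨v, hv⟩ := hadj
    obtain ⟨x, hx1, hx2⟩ := hcov _ _ this
    exact ⟨x, ⟨⟨u, hu⟩, hx1, rfl⟩, ⟨⟨v, hv⟩, hx2, rfl⟩⟩
  · intro v hv
    have hset : {x | v ∈ Subtype.val '' B x} = {x | (⟨v, hv⟩ : U) ∈ B x} := by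
      ext x
      simp only [Set.mem_setOf_eq, Set.mem_image]
      constructor
      · rintro ⟨⟨w, hw⟩, hmem, rfl⟩
        exact hmem
      · intro hmem
        exact ⟨⟨v, hv⟩, hmem, rfl⟩
    rw [hset]
    exact hconn ⟨v, hv⟩
  · intro x
    calc (Subtype.val '' B x ∩ U).ncard ≤ (Subtype.val '' B x).ncard := by
          exact Set.ncard_le_ncard Set.inter_subset_left
            (Set.Finite.image _ ((hsize x).1))
      _ = (B x).ncard := Set.ncard_image_of_injective _ Subtype.val_injective
      _ ≤ m := (hsize x).2

/-- integer window fitting: an interval of length < M fits in a window of one of the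
two families of aligned intervals of length 2M -/
lemma window_fit (M a b : ℤ) (hM : 0 < M) (hab : a ≤ b) (h : b - a ≤ M - 1) :
    ∃ o k : ℤ, (o = 0 ∨ o = M) ∧ k * (2*M) + o ≤ a ∧ b < k * (2*M) + o + 2*M := by
  have h2M : (0:ℤ) < 2*M := by omega
  set q := a / (2*M) with hq
  have hdiv := Int.mul_ediv_add_emod a (2*M)
  have hmod0 : 0 ≤ a % (2*M) := Int.emod_nonneg a (by omega)
  have hmod1 : a % (2*M) < 2*M := Int.emod_lt_of_pos a h2M
  have hqe : q * (2*M) = 2*M * (a / (2*M)) := by rw [hq]; ring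
  by_cases hcase : a % (2*M) < M
  · exact ⟨0, q, Or.inl rfl, by omega, by omega⟩
  · exact ⟨M, q, Or.inr rfl, by omega, by omega⟩

end Outer


end BakerProof

lemma log2'_one_le (x : ℝ) : 1 ≤ log2' x := by
  unfold log2'
  split_ifs with h
  · exact le_refl _
  · push_neg at h
    calc (1:ℝ) = Real.logb 2 2 := (Real.logb_self_eq_one (by norm_num)).symm
      _ ≤ Real.logb 2 x := Real.logb_le_logb_of_le (by norm_num) (by norm_num) (le_of_lt h)

namespace BakerProof

section Helpers

variable {V : Type} {G : SimpleGraph V}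

lemma layer_span {ℓ : V → ℤ} (hedge : ∀ u w, G.Adj u w → |ℓ u - ℓ w| ≤ 1) {a b : V}
    (p : G.Walk a b) : |ℓ a - ℓ b| ≤ p.length := by
  induction p with
  | nil => simp
  | @cons u c w hadj q ih =>
    have h1 := hedge u c hadj
    have h2 : |ℓ u - ℓ w| ≤ |ℓ u - ℓ c| + |ℓ c - ℓ w| := abs_sub_le _ _ _
    rw [Walk.length_cons]
    push_cast
    omega

lemma window_disjoint {H o x k k' : ℤ} (hH : 0 < H)
    (h1 : k*H + o ≤ x) (h2 : x < k*H + o + H)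
    (h3 : k'*H + o ≤ x) (h4 : x < k'*H + o + H) : k = k' := by
  by_contra hne
  rcases lt_or_gt_of_ne hne with h | h
  · have h5 : (k+1) ≤ k' := h
    have h6 : (k+1)*H ≤ k'*H := mul_le_mul_of_nonneg_right h5 (le_of_lt hH)
    have e : (k+1)*H = k*H + H := by ring
    linarith
  · have h5 : (k'+1) ≤ k := h
    have h6 : (k'+1)*H ≤ k*H := mul_le_mul_of_nonneg_right h5 (le_of_lt hH)
    have e : (k'+1)*H = k'*H + H := by ring
    linarith

end Helpers

end BakerProof


open BakerProof
/-- **Lemma.** For every real `D` and integer `n` with `1 ≤ D ≤ n`, every `n`-vertex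
`t`-Baker graph `G` contains a set `X` of at most `(18·t·n·log n)/D` vertices such that
`G − X` has local density at most `D`. -/
theorem baker_local_sparsification
    (t n : ℕ) (D : ℝ) (hD1 : 1 ≤ D) (hDn : D ≤ n)
    (V : Type) [Fintype V] [DecidableEq V] (G : SimpleGraph V)
    (hcard : Fintype.card V = n) (hBaker : IsTBaker G t) :
    ∃ X : Finset V,
      (X.card : ℝ) ≤ 18 * t * n * log2' n / D ∧
      LocalDensityLE (deleteVerts G X) D := by
  classical
  obtain ⟨L, ⟨hLuniq, hLedge⟩, hLtw⟩ := hBaker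
  set ℓ : V → ℤ := fun v => (hLuniq v).choose with hℓdef
  have hℓmem : ∀ v, v ∈ L (ℓ v) := fun v => (hLuniq v).choose_spec.1
  have hℓuniq : ∀ v s, v ∈ L s → s = ℓ v := fun v s hs => (hLuniq v).choose_spec.2 s hs
  have hedge : ∀ u w, G.Adj u w → |ℓ u - ℓ w| ≤ 1 :=
    fun u w h => hLedge u w h (ℓ u) (ℓ w) (hℓmem u) (hℓmem w)
  have hD0 : (0:ℝ) < D := lt_of_lt_of_le one_pos hD1
  have hn1 : 1 ≤ n := by exact_mod_cast le_trans hD1 hDn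
  have hVne : Nonempty V := by
    rw [← Fintype.card_pos_iff, hcard]; omega
  -- t ≥ 1
  have ht1 : 1 ≤ t := by
    obtain ⟨v₀⟩ := hVne
    have hdec := hLtw (ℓ v₀) 1
    obtain ⟨τ, T, B, ⟨hT, hcov, hconn⟩, hsize⟩ := hdec
    have hv₀U : v₀ ∈ ⋃ i ∈ Finset.range 1, L (ℓ v₀ + i) := by
      refine Set.mem_biUnion (Finset.mem_range.mpr zero_lt_one) ?_
      simpa using hℓmem v₀
    obtain ⟨⟨x, hx⟩⟩ := (hconn ⟨v₀, hv₀U⟩).nonempty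
    have h1 : 0 < (B x).ncard := by
      rw [Set.ncard_pos ((hsize x).1)]
      exact ⟨_, hx⟩
    have := (hsize x).2
    omega
  by_cases htriv : D ≤ 18 * t * log2' n
  · -- trivial case : delete everything
    refine ⟨Finset.univ, ?_, ?_⟩
    · rw [Finset.card_univ, hcard, le_div_iff₀ hD0]
      calc (n:ℝ) * D ≤ n * (18 * t * log2' n) :=
            mul_le_mul_of_nonneg_left htriv (Nat.cast_nonneg n)
        _ = 18 * t * n * log2' n := by ring
    · intro v r hr
      exact absurd (Finset.mem_univ v.1) v.2
  -- main case
  push_neg at htriv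
  have hlog1 : (1:ℝ) ≤ log2' n := log2'_one_le _
  have ht1R : (1:ℝ) ≤ t := by exact_mod_cast ht1
  have hD18 : (18:ℝ) < D := by nlinarith
  have hn18 : (18:ℝ) < n := lt_of_lt_of_le hD18 hDn
  have hn2 : (2:ℝ) < n := by linarith
  have hlogn : log2' n = Real.logb 2 n := if_neg (by push_neg; linarith)
  have hlogpos : (0:ℝ) < Real.logb 2 n := by rw [← hlogn]; linarith
  -- number of scales
  have hKex : ∃ K : ℕ, (n:ℝ) ≤ D * 2^K := by
    refine ⟨n, ?_⟩
    calc (n:ℝ) ≤ 2^n := by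
          exact_mod_cast le_of_lt (Nat.lt_two_pow_self (n := n))
      _ ≤ D * 2^n := le_mul_of_one_le_left (by positivity) hD1
  set K := Nat.find hKex with hKdef
  have hKtop : (n:ℝ) ≤ D * 2^K := Nat.find_spec hKex
  have hKle : (K:ℝ) ≤ Real.logb 2 n := by
    rcases Nat.eq_zero_or_pos K with h0 | hpos
    · rw [h0]; push_cast; linarith
    · have hKm := Nat.find_min hKex (m := K - 1) (by omega)
      push_neg at hKm
      have h1 : Real.logb 2 (D * 2^(K-1)) < Real.logb 2 n := by
        apply Real.logb_lt_logb (by norm_num) (by positivity) hKm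
      rw [Real.logb_mul (by positivity) (by positivity), Real.logb_pow,
        Real.logb_self_eq_one (by norm_num)] at h1
      have h2 : (4:ℝ) ≤ Real.logb 2 D := by
        calc (4:ℝ) = Real.logb 2 (2^(4:ℕ)) := by
              rw [Real.logb_pow, Real.logb_self_eq_one (by norm_num)]; norm_num
          _ ≤ Real.logb 2 D := by
              apply Real.logb_le_logb_of_le (by norm_num) (by norm_num)
              norm_num; linarith
      have h3 : ((K:ℝ) - 1) ≤ ((K-1 : ℕ) : ℝ) := by
        push_cast [Nat.cast_sub (by omega : 1 ≤ K)]; linarith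
      linarith
  -- windows and their decompositions
  set offs : ℕ → Bool → ℤ := fun j f => if f then 2^(j+2) else 0 with hoffs
  set Wset : ℕ → Bool → ℤ → Set V := fun j f k =>
    {v | k * (2^(j+3) : ℤ) + offs j f ≤ ℓ v ∧ ℓ v < k * (2^(j+3):ℤ) + offs j f + 2^(j+3)}
    with hWsetdef
  have hWdecomp : ∀ (j : ℕ) (f : Bool) (k : ℤ), GoodDecomp G (Wset j f k) (2^(j+3) * t) := by
    intro j f k
    have hbase := hLtw (k * (2^(j+3):ℤ) + offs j f) (2^(j+3))
    have hEq : (⋃ i ∈ Finset.range (2^(j+3)), L (k * (2^(j+3):ℤ) + offs j f + i)) =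
        Wset j f k := by
      ext v
      simp only [Set.mem_iUnion, Finset.mem_range, exists_prop, hWsetdef, Set.mem_setOf_eq]
      have hcast : ((2:ℕ):ℤ)^(j+3) = (2:ℤ)^(j+3) := by norm_cast
      constructor
      · rintro ⟨i, hi, hvL⟩
        have heq := hℓuniq v _ hvL
        have hi' : (i:ℤ) < (2:ℤ)^(j+3) := by exact_mod_cast hi
        constructor
        · omega
        · omega
      · rintro ⟨h1, h2⟩
        refine ⟨(ℓ v - (k * (2^(j+3):ℤ) + offs j f)).toNat, ?_, ?_⟩
        · omega
        · have htn : ((ℓ v - (k * (2^(j+3):ℤ) + offs j f)).toNat : ℤ) =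
            ℓ v - (k * (2^(j+3):ℤ) + offs j f) := Int.toNat_of_nonneg (by omega)
          have : k * (2^(j+3):ℤ) + offs j f +
              ((ℓ v - (k * (2^(j+3):ℤ) + offs j f)).toNat : ℤ) = ℓ v := by omega
          rw [this]
          exact hℓmem v
    rw [← hEq]
    exact goodDecomp_of_hasTreeDecomp (hbase)
  -- piece sizes
  set sj : ℕ → ℕ := fun j => ⌈D * 2^j⌉₊ - 1 with hsjdef
  have hsj1 : ∀ j, (sj j : ℕ) + 1 = ⌈D * 2^j⌉₊ := by
    intro j
    have h1 : 0 < ⌈D * 2^j⌉₊ := Nat.ceil_pos.mpr (by positivity)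
    simp only [hsjdef]
    omega
  have hsjlb : ∀ j, D * 2^j ≤ ((sj j : ℕ) : ℝ) + 1 := by
    intro j
    have := Nat.le_ceil (D * 2^j)
    calc D * 2^j ≤ (⌈D * 2^j⌉₊ : ℝ) := this
      _ = ((sj j : ℕ) : ℝ) + 1 := by exact_mod_cast (hsj1 j).symm
  have hsjub : ∀ j, ((sj j : ℕ) : ℝ) ≤ D * 2^j := by
    intro j
    have h1 : (⌈D * 2^j⌉₊ : ℝ) < D * 2^j + 1 := Nat.ceil_lt_add_one (by positivity)
    have h2 : ((sj j : ℕ) : ℝ) + 1 = (⌈D * 2^j⌉₊ : ℝ) := by exact_mod_cast (hsj1 j)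
    linarith
  -- cut within each window
  have hcutex : ∀ (j : ℕ) (f : Bool) (k : ℤ), ∃ X : Set V, X ⊆ Wset j f k ∧
      (sj j + 1) * X.ncard ≤ (2^(j+3) * t) * (Wset j f k).ncard ∧
      ∀ A ⊆ Wset j f k \ X, WalkConn G A → A.ncard ≤ sj j :=
    fun j f k => cut (s := sj j) (Wset j f k).ncard _ le_rfl (hWdecomp j f k)
  choose Xc hXcsub hXccard hXcpieces using hcutex
  -- window indices
  set widx : ℕ → Bool → V → ℤ := fun j f v => (ℓ v - offs j f) / (2^(j+3) : ℤ) with hwidxdef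
  have hwidx : ∀ (j : ℕ) (f : Bool) (k : ℤ) (v : V), v ∈ Wset j f k → widx j f v = k := by
    intro j f k v hv
    obtain ⟨h1, h2⟩ := hv
    have hH : (0:ℤ) < 2^(j+3) := by positivity
    have hdm := Int.mul_ediv_add_emod (ℓ v - offs j f) (2^(j+3))
    have hm0 : 0 ≤ (ℓ v - offs j f) % (2^(j+3)) := Int.emod_nonneg _ (by omega)
    have hm1 : (ℓ v - offs j f) % (2^(j+3)) < 2^(j+3) := Int.emod_lt_of_pos _ hH
    refine window_disjoint (H := (2^(j+3):ℤ)) (o := offs j f) (x := ℓ v) hH ?_ ?_ h1 h2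
    · have : widx j f v * 2^(j+3) = 2^(j+3) * ((ℓ v - offs j f) / 2^(j+3)) := by
        rw [hwidxdef]; ring
      omega
    · have : widx j f v * 2^(j+3) = 2^(j+3) * ((ℓ v - offs j f) / 2^(j+3)) := by
        rw [hwidxdef]; ring
      omega
  set Kset : ℕ → Bool → Finset ℤ := fun j f => Finset.image (widx j f) Finset.univ with hKsetdef
  set Xjf : ℕ → Bool → Set V := fun j f => ⋃ k ∈ Kset j f, Xc j f k with hXjfdef
  set Xall : Set V := ⋃ j ∈ Finset.range K, (Xjf j false ∪ Xjf j true) with hXalldef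
  set Xfin : Finset V := (Set.toFinite Xall).toFinset with hXfindef
  have hXfinmem : ∀ v, v ∈ Xfin ↔ v ∈ Xall := fun v => Set.Finite.mem_toFinset _
  -- cardinality of each Xjf
  have hXjfcard : ∀ (j : ℕ) (f : Bool), ((Xjf j f).ncard : ℝ) ≤ 8 * t * n / D := by
    intro j f
    have hdisj : ∀ k ∈ Kset j f, ∀ k' ∈ Kset j f, k ≠ k' →
        Disjoint (Wset j f k) (Wset j f k') := by
      intro k _ k' _ hne
      rw [Set.disjoint_left]
      intro v hv hv'
      exact hne (window_disjoint (by positivity) hv.1 hv.2 hv'.1 hv'.2)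
    have hsum : ∑ k ∈ Kset j f, (Wset j f k).ncard ≤ n := by
      rw [← hcard]
      exact sum_ncard_le _ _ hdisj
    have h1 : (Xjf j f).ncard ≤ ∑ k ∈ Kset j f, (Xc j f k).ncard := ncard_biUnion_le _ _
    have h2 : (sj j + 1) * (Xjf j f).ncard ≤ (2^(j+3) * t) * n := by
      calc (sj j + 1) * (Xjf j f).ncard ≤ (sj j + 1) * ∑ k ∈ Kset j f, (Xc j f k).ncard :=
            Nat.mul_le_mul_left _ h1
        _ = ∑ k ∈ Kset j f, (sj j + 1) * (Xc j f k).ncard := by rw [Finset.mul_sum]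
        _ ≤ ∑ k ∈ Kset j f, (2^(j+3) * t) * (Wset j f k).ncard :=
            Finset.sum_le_sum (fun k _ => hXccard j f k)
        _ = (2^(j+3) * t) * ∑ k ∈ Kset j f, (Wset j f k).ncard := by rw [Finset.mul_sum]
        _ ≤ (2^(j+3) * t) * n := Nat.mul_le_mul_left _ hsum
    -- cast to ℝ
    have h2R : (((sj j : ℕ) : ℝ) + 1) * ((Xjf j f).ncard : ℝ) ≤ (2:ℝ)^(j+3) * t * n := by
      exact_mod_cast h2
    have hs0 : (0:ℝ) < ((sj j : ℕ) : ℝ) + 1 := by positivity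
    have h3 : ((Xjf j f).ncard : ℝ) ≤ ((2:ℝ)^(j+3) * t * n) / (((sj j : ℕ) : ℝ) + 1) := by
      rw [le_div_iff₀ hs0]
      linarith [h2R]
    refine le_trans h3 ?_
    have hDlb : D * 2^j ≤ ((sj j : ℕ) : ℝ) + 1 := hsjlb j
    have hD2j : (0:ℝ) < D * 2^j := by positivity
    calc ((2:ℝ)^(j+3) * t * n) / (((sj j : ℕ) : ℝ) + 1)
        ≤ ((2:ℝ)^(j+3) * t * n) / (D * 2^j) := by
          apply div_le_div_of_nonneg_left (by positivity) hD2j hDlb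
      _ = 8 * t * n / D := by
          rw [pow_add]
          have h2j : (0:ℝ) < (2:ℝ)^j := by positivity
          field_simp
          ring
  -- total cardinality
  have hXallcard : ((Xall.ncard : ℕ) : ℝ) ≤ 16 * K * t * n / D := by
    have h1 : Xall.ncard ≤ ∑ j ∈ Finset.range K, (Xjf j false ∪ Xjf j true).ncard :=
      ncard_biUnion_le _ _
    have h2 : (Xall.ncard : ℝ) ≤
        ∑ j ∈ Finset.range K, (((Xjf j false).ncard : ℝ) + ((Xjf j true).ncard : ℝ)) := by
      calc (Xall.ncard : ℝ) ≤ (∑ j ∈ Finset.range K, (Xjf j false ∪ Xjf j true).ncard : ℕ) := by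
            exact_mod_cast h1
        _ ≤ _ := by
            push_cast
            refine Finset.sum_le_sum (fun j _ => ?_)
            exact_mod_cast Set.ncard_union_le _ _
    refine le_trans h2 ?_
    calc ∑ j ∈ Finset.range K, (((Xjf j false).ncard : ℝ) + ((Xjf j true).ncard : ℝ))
        ≤ ∑ _j ∈ Finset.range K, (16 * t * n / D : ℝ) := by
          refine Finset.sum_le_sum (fun j _ => ?_)
          have hf := hXjfcard j false
          have ht' := hXjfcard j true
          have : (16 * t * n / D : ℝ) = 8 * t * n / D + 8 * t * n / D := by ring
          linarith
      _ = K * (16 * t * n / D) := by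
          rw [Finset.sum_const, Finset.card_range]
          simp [nsmul_eq_mul]
      _ = 16 * K * t * n / D := by ring
  refine ⟨Xfin, ?_, ?_⟩
  · -- cardinality bound
    have hcardeq : (Xfin.card : ℝ) = (Xall.ncard : ℝ) := by
      rw [hXfindef]
      norm_cast
      exact (Set.ncard_eq_toFinset_card _ (Set.toFinite Xall)).symm
    rw [hcardeq]
    refine le_trans hXallcard ?_
    rw [hlogn]
    have h16 : (16:ℝ) * K ≤ 18 * Real.logb 2 n := by
      calc (16:ℝ) * K ≤ 16 * Real.logb 2 n := by linarith [hKle]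
        _ ≤ 18 * Real.logb 2 n := by linarith [hlogpos]
    rw [div_le_div_iff₀ hD0 hD0]
    have htn0 : (0:ℝ) ≤ (t:ℝ) * n := by positivity
    calc (16:ℝ) * K * t * n * D = (16 * K) * (t * n) * D := by ring
      _ ≤ (18 * Real.logb 2 n) * (t * n) * D := by
          apply mul_le_mul_of_nonneg_right _ (le_of_lt hD0)
          exact mul_le_mul_of_nonneg_right h16 htn0
      _ = 18 * t * n * Real.logb 2 n * D := by ring
  · -- local density
    intro v r hr
    set G' := deleteVerts G Xfin with hG'def
    set Ball : Set {x : V // x ∉ Xfin} :=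
      {w | G'.Reachable v w ∧ ((G'.dist v w : ℕ) : ℝ) ≤ r} with hBalldef
    show ((Nat.card ↥Ball : ℕ) : ℝ) - 1 ≤ D * r
    have hcardB : (Nat.card ↥Ball : ℕ) = Ball.ncard := Nat.card_coe_set_eq _
    by_cases hr1 : r < 1
    · -- small radius
      have hsub : Ball ⊆ {v} := by
        intro w hw
        obtain ⟨hreach, hdist⟩ := hw
        have h0 : G'.dist v w = 0 := by
          by_contra hne
          have h1 : 1 ≤ G'.dist v w := by omega
          have : (1:ℝ) ≤ ((G'.dist v w : ℕ) : ℝ) := by exact_mod_cast h1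
          linarith
        have := (hreach.dist_eq_zero_iff).mp h0
        simp [this.symm]
      have h1 : Ball.ncard ≤ 1 := by
        calc Ball.ncard ≤ ({v} : Set _).ncard := Set.ncard_le_ncard hsub (Set.toFinite _)
          _ = 1 := Set.ncard_singleton _
      rw [hcardB]
      have : ((Ball.ncard : ℕ) : ℝ) ≤ 1 := by exact_mod_cast h1
      nlinarith
    push_neg at hr1
    by_cases hbigr : (n:ℝ) ≤ D * r
    · -- huge radius
      have h1 : Ball.ncard ≤ n := by
        calc Ball.ncard ≤ (Set.univ : Set {x : V // x ∉ Xfin}).ncard :=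
              Set.ncard_le_ncard (Set.subset_univ _) (Set.toFinite _)
          _ = Fintype.card {x : V // x ∉ Xfin} := by
              rw [Set.ncard_univ, Nat.card_eq_fintype_card]
          _ ≤ Fintype.card V := Fintype.card_subtype_le _
          _ = n := hcard
      rw [hcardB]
      have : ((Ball.ncard : ℕ) : ℝ) ≤ n := by exact_mod_cast h1
      linarith
    push_neg at hbigr
    -- medium radius : use the scales
    set ρn : ℕ := ⌊r⌋₊ with hρdef
    have hρ1 : 1 ≤ ρn := Nat.le_floor (by exact_mod_cast hr1)
    have hρr : (ρn : ℝ) ≤ r := Nat.floor_le (by linarith)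
    set j := Nat.log 2 ρn with hjdef
    have hj1 : 2^j ≤ ρn := Nat.pow_log_le_self 2 (by omega)
    have hj2 : ρn < 2^(j+1) := Nat.lt_pow_succ_log_self (by norm_num) _
    have hjK : j < K := by
      have h2j : ((2:ℝ))^j ≤ r := by
        calc ((2:ℝ))^j = ((2^j : ℕ) : ℝ) := by push_cast; ring
          _ ≤ (ρn : ℝ) := by exact_mod_cast hj1
          _ ≤ r := hρr
      have hrK : r < (2:ℝ)^K := by
        by_contra hcon
        push_neg at hcon
        have : D * 2^K ≤ D * r := mul_le_mul_of_nonneg_left hcon (le_of_lt hD0)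
        linarith
      have : ((2:ℝ))^j < (2:ℝ)^K := lt_of_le_of_lt h2j hrK
      exact_mod_cast (pow_lt_pow_iff_right₀ (by norm_num : (1:ℝ) < 2)).mp this
    -- walks within the ball
    have hvB : v ∈ Ball := ⟨Reachable.refl v, by
      rw [SimpleGraph.dist_self]; push_cast; linarith⟩
    let hom : G' →g G := ⟨Subtype.val, fun {a b} hab => hab⟩
    have hball_walk : ∀ w ∈ Ball, ∃ p : G'.Walk v w, ∀ u ∈ p.support, u ∈ Ball := by
      intro w hw
      obtain ⟨p, hp⟩ := hw.1.exists_walk_length_eq_dist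
      refine ⟨p, ?_⟩
      intro u hu
      have hreach : G'.Reachable v u := ⟨p.takeUntil u hu⟩
      have hd : G'.dist v u ≤ G'.dist v w := by
        calc G'.dist v u ≤ (p.takeUntil u hu).length := dist_le _
          _ ≤ p.length := Walk.length_takeUntil_le _ _
          _ = G'.dist v w := hp
      refine ⟨hreach, ?_⟩
      calc ((G'.dist v u : ℕ) : ℝ) ≤ ((G'.dist v w : ℕ) : ℝ) := by exact_mod_cast hd
        _ ≤ r := hw.2
    -- the ball seen in V
    set A : Set V := Subtype.val '' Ball with hAdef
    have hAconn : WalkConn G A := by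
      rintro a ⟨wa, hwa, rfl⟩ b ⟨wb, hwb, rfl⟩
      obtain ⟨pa, hpa⟩ := hball_walk wa hwa
      obtain ⟨pb, hpb⟩ := hball_walk wb hwb
      refine ⟨(pa.reverse.append pb).map hom, ?_⟩
      intro c hc
      rw [Walk.support_map, List.mem_map] at hc
      obtain ⟨u, hu, rfl⟩ := hc
      rw [Walk.mem_support_append_iff] at hu
      rcases hu with hu | hu
      · rw [Walk.support_reverse, List.mem_reverse] at hu
        exact ⟨u, hpa u hu, rfl⟩
      · exact ⟨u, hpb u hu, rfl⟩
    -- distance bound within the ball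
    have hdistb : ∀ w ∈ Ball, G'.dist v w ≤ ρn := by
      intro w hw
      exact Nat.le_floor hw.2
    -- layers of the ball
    have hspan : ∀ a ∈ A, ℓ (v : V) - ρn ≤ ℓ a ∧ ℓ a ≤ ℓ (v : V) + ρn := by
      rintro a ⟨w, hw, rfl⟩
      obtain ⟨p, hp⟩ := hw.1.exists_walk_length_eq_dist
      have hlen : p.length ≤ ρn := by rw [hp]; exact hdistb w hw
      have := layer_span hedge (p.map hom)
      rw [Walk.length_map] at this
      have habs : |ℓ (v:V) - ℓ (w:V)| ≤ (ρn : ℤ) := by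
        refine le_trans this ?_
        exact_mod_cast hlen
      rw [abs_le] at habs
      omega
    -- find the window
    have hspan2 : (ℓ (v:V) + ρn) - (ℓ (v:V) - ρn) ≤ 2^(j+2) - 1 := by
      have h1 : (ρn : ℤ) < 2^(j+1) := by exact_mod_cast hj2
      have h2 : (2:ℤ)^(j+2) = 2 * 2^(j+1) := by ring
      omega
    obtain ⟨o, k, ho, hk1, hk2⟩ := window_fit (2^(j+2)) (ℓ (v:V) - ρn) (ℓ (v:V) + ρn)
      (by positivity) (by omega) hspan2
    set f : Bool := if o = 0 then false else true with hfdef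
    have hoff : offs j f = o := by
      rcases ho with h | h
      · simp [hfdef, h, hoffs]
      · have : o ≠ 0 := by
          rw [h]; positivity
        simp [hfdef, this, hoffs, h]
    have hWin : ∀ a ∈ A, a ∈ Wset j f k := by
      intro a ha
      obtain ⟨h1, h2⟩ := hspan a ha
      have e : (2:ℤ) * 2^(j+2) = 2^(j+3) := by ring
      have e2 : k * ((2:ℤ) * 2^(j+2)) = k * 2^(j+3) := by ring
      refine ⟨?_, ?_⟩ <;> rw [hoff] <;> omega
    -- identify the window index
    have hvA : (v : V) ∈ A := ⟨v, hvB, rfl⟩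
    have hkK : k ∈ Kset j f := by
      rw [hKsetdef]
      simp only [Finset.mem_image, Finset.mem_univ, true_and]
      exact ⟨(v : V), hwidx j f k _ (hWin _ hvA)⟩
    -- A avoids the removed set
    have hAX : ∀ a ∈ A, a ∉ Xc j f k := by
      rintro a ⟨w, hw, rfl⟩ hmem
      apply w.2
      rw [hXfinmem]
      rw [hXalldef]
      refine Set.mem_biUnion (Finset.mem_range.mpr hjK) ?_
      rcases Bool.dichotomy f with hf | hf
      · left
        rw [hXjfdef]
        rw [hf] at hkK hmem
        exact Set.mem_biUnion hkK hmem
      · right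
        rw [hXjfdef]
        rw [hf] at hkK hmem
        exact Set.mem_biUnion hkK hmem
    -- conclude
    have hA : A.ncard ≤ sj j := by
      refine hXcpieces j f k A ?_ hAconn
      intro a ha
      exact ⟨hWin a ha, hAX a ha⟩
    have hAB : A.ncard = Ball.ncard := Set.ncard_image_of_injective _ Subtype.val_injective
    rw [hcardB]
    have hfinal : ((Ball.ncard : ℕ) : ℝ) ≤ D * r := by
      calc ((Ball.ncard : ℕ) : ℝ) = ((A.ncard : ℕ) : ℝ) := by rw [hAB]
        _ ≤ ((sj j : ℕ) : ℝ) := by exact_mod_cast hA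
        _ ≤ D * 2^j := hsjub j
        _ ≤ D * r := by
            apply mul_le_mul_of_nonneg_left _ (le_of_lt hD0)
            calc ((2:ℝ))^j = ((2^j : ℕ) : ℝ) := by push_cast; ring
              _ ≤ (ρn : ℝ) := by exact_mod_cast hj1
              _ ≤ r := hρr
    linarith
end
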